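/- arXiv:1503.00891 — 3 statements merged into one kernel-verified Lean document; each statement's English description precedes it below -/
import Mathlib

section
/- Let μ be a homogeneous homothetic self-similar measure in ℝ² (i.e., μ = Σ_{i=1}^q p_i (f_i)_*μ where f_i(x) = λx + t_i, all maps share the same contraction ratio λ ∈ (0,1), and the p_i are strictly positive) satisfying the strong separation condition and whose support is not contained in any line. Then there exists a constant c > 0 such that for every orthogonal projection π from ℝ² onto a one-dimensional subspace, the Hausdorff dimension of the projected measure π_*μ is at least c. -/
open MeasureTheory Metric Filter Set
open scoped ENNReal NNReal Topology RealInnerProductSpace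

set_option maxHeartbeats 4000000

/-- Hausdorff dimension of a measure: `inf {dimH A : μ A > 0}`. -/
noncomputable def dimHMeasure {X : Type*} [MetricSpace X] [MeasurableSpace X]
    (μ : Measure X) : ℝ≥0∞ :=
  ⨅ (A : Set X) (_ : 0 < μ A), dimH A

/-- Topological support of a measure. -/
def msupport {X : Type*} [TopologicalSpace X] [MeasurableSpace X] (μ : Measure X) : Set X :=
  {x | ∀ U ∈ nhds x, 0 < μ U}

/-- Iterated self-similarity: expanding the self-similar identity `m` times. -/
lemma expandSS {E : Type*} [NormedAddCommGroup E] [NormedSpace ℝ E] [MeasurableSpace E]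
    [BorelSpace E] {q : ℕ} (lam : ℝ) (t : Fin q → E) (f : Fin q → E → E)
    (hf : ∀ i x, f i x = lam • x + t i) (p : Fin q → ℝ≥0∞)
    (μ : Measure E) (hμ : μ = ∑ i, p i • μ.map (f i)) :
    ∀ (m : ℕ) (s : Set E), MeasurableSet s →
      μ s = ∑ w : Fin m → Fin q, (∏ k, p (w k)) *
        μ ((fun x => (lam ^ m) • x + ∑ k : Fin m, lam ^ (k : ℕ) • t (w k)) ⁻¹' s) := by
  have hfm : ∀ i, Measurable (f i) := by
    intro i
    have : f i = fun x => lam • x + t i := funext (hf i)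
    rw [this]
    exact ((continuous_id.const_smul lam).add continuous_const).measurable
  intro m
  induction m with
  | zero =>
    intro s hs
    rw [Fintype.sum_unique]
    simp
  | succ m ih =>
    intro s hs
    have h1 : μ s = ∑ i, p i * μ (f i ⁻¹' s) := by
      conv_lhs => rw [hμ]
      rw [Measure.finset_sum_apply]
      refine Finset.sum_congr rfl fun i _ => ?_
      rw [Measure.smul_apply, smul_eq_mul, Measure.map_apply (hfm i) hs]
    rw [h1]
    rw [← Equiv.sum_comp (Fin.consEquiv (fun _ : Fin (m+1) => Fin q))]
    rw [Fintype.sum_prod_type]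
    refine Finset.sum_congr rfl fun b _ => ?_
    rw [ih _ (hs.preimage (hfm b)), Finset.mul_sum]
    refine Finset.sum_congr rfl fun u _ => ?_
    have hprod : (∏ k, p ((Fin.consEquiv (fun _ : Fin (m+1) => Fin q)) (b, u) k))
        = p b * ∏ k, p (u k) := by
      simp [Fin.consEquiv, Fin.prod_univ_succ]
    have hpre : ((fun x => (lam ^ (m+1)) • x + ∑ k : Fin (m+1),
          lam ^ (k : ℕ) • t ((Fin.consEquiv (fun _ : Fin (m+1) => Fin q)) (b, u) k)) ⁻¹' s)
        = (fun x => (lam ^ m) • x + ∑ k : Fin m, lam ^ (k : ℕ) • t (u k)) ⁻¹' (f b ⁻¹' s) := by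
      have hfun : (fun x => (lam ^ (m+1)) • x + ∑ k : Fin (m+1),
            lam ^ (k : ℕ) • t ((Fin.consEquiv (fun _ : Fin (m+1) => Fin q)) (b, u) k))
          = fun x => f b ((lam ^ m) • x + ∑ k : Fin m, lam ^ (k : ℕ) • t (u k)) := by
        funext x
        rw [hf]
        simp only [Fin.consEquiv, Equiv.coe_fn_mk, Fin.sum_univ_succ, Fin.cons_zero, Fin.cons_succ]
        rw [smul_add, smul_smul, Finset.smul_sum]
        simp only [smul_smul, Fin.val_zero, Fin.val_succ, pow_zero, one_smul, pow_succ]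
        have hsum : ∑ k : Fin m, (lam ^ (k : ℕ) * lam) • t (u k)
            = ∑ k : Fin m, (lam * lam ^ (k : ℕ)) • t (u k) :=
          Finset.sum_congr rfl fun k _ => by rw [mul_comm]
        rw [hsum, mul_comm lam (lam ^ m)]
        abel
      rw [hfun]
      rfl
    rw [hprod, hpre, mul_assoc]

/-- The complement of the topological support of a measure is null. -/
lemma msupport_compl_null {X : Type*} [TopologicalSpace X] [MeasurableSpace X]
    [SecondCountableTopology X] (μ : Measure X) : μ (msupport μ)ᶜ = 0 := by
  apply measure_null_of_locally_null
  intro x hx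
  simp only [msupport, mem_compl_iff, mem_setOf_eq, not_forall] at hx
  obtain ⟨U, hU, hU0⟩ := hx
  exact ⟨U, nhdsWithin_le_nhds hU, by simpa using hU0⟩

/-- In `ℝ²`, the orthogonal complement of a nonzero vector is spanned by a single vector. -/
lemma perp_vector (v : EuclideanSpace ℝ (Fin 2)) (hv : v ≠ 0) :
    ∃ u : EuclideanSpace ℝ (Fin 2), u ≠ 0 ∧
      ∀ w : EuclideanSpace ℝ (Fin 2), ⟪w, v⟫ = 0 → ∃ c : ℝ, w = c • u := by
  set u : EuclideanSpace ℝ (Fin 2) := (WithLp.equiv 2 (Fin 2 → ℝ)).symm ![-(v 1), v 0] with hu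
  have hu0 : u 0 = -(v 1) := by simp [hu]
  have hu1 : u 1 = v 0 := by simp [hu]
  have hvcases : v 0 ≠ 0 ∨ v 1 ≠ 0 := by
    by_contra h
    push_neg at h
    apply hv
    ext i
    fin_cases i
    · exact h.1
    · exact h.2
  have hinner : ∀ w : EuclideanSpace ℝ (Fin 2), ⟪w, v⟫ = w 0 * v 0 + w 1 * v 1 := by
    intro w
    simp [PiLp.inner_apply, RCLike.inner_apply, Fin.sum_univ_two, mul_comm]
  refine ⟨u, ?_, ?_⟩
  · intro h
    rcases hvcases with h0 | h1
    · apply h0; have := congrArg (fun x : EuclideanSpace ℝ (Fin 2) => x 1) h; simpa [hu1] using this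
    · apply h1; have := congrArg (fun x : EuclideanSpace ℝ (Fin 2) => x 0) h; simpa [hu0] using this
  · intro w hw
    rw [hinner] at hw
    rcases hvcases with h0 | h1
    · refine ⟨w 1 / v 0, ?_⟩
      ext i
      fin_cases i
      · show w 0 = (w 1 / v 0) * u 0
        rw [hu0]; field_simp; linarith [hw]
      · show w 1 = (w 1 / v 0) * u 1
        rw [hu1]; field_simp
    · refine ⟨-(w 0) / v 1, ?_⟩
      ext i
      fin_cases i
      · show w 0 = (-(w 0) / v 1) * u 0
        rw [hu0]; field_simp
      · show w 1 = (-(w 0) / v 1) * u 1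
        rw [hu1]; field_simp; linarith [hw]

/-- A homogeneous homothetic self-similar measure in `ℝ²` with strong separation whose support
is not contained in any line has all its orthogonal projections of dimension at least `c > 0`. -/
theorem dimH_proj_HHSS_measure_pos {q : ℕ} (hq : 0 < q)
    (lam : ℝ) (hlam0 : 0 < lam) (hlam1 : lam < 1)
    (t : Fin q → EuclideanSpace ℝ (Fin 2))
    (f : Fin q → EuclideanSpace ℝ (Fin 2) → EuclideanSpace ℝ (Fin 2))
    (hf : ∀ i x, f i x = lam • x + t i)
    (p : Fin q → ℝ≥0∞) (hp : ∀ i, 0 < p i) (hpsum : ∑ i, p i = 1)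
    (μ : Measure (EuclideanSpace ℝ (Fin 2))) [IsProbabilityMeasure μ]
    (hμ : μ = ∑ i, p i • μ.map (f i))
    (Λ : Set (EuclideanSpace ℝ (Fin 2)))
    (hΛcomp : IsCompact Λ) (hΛne : Λ.Nonempty)
    (hattr : Λ = ⋃ i, f i '' Λ)
    (hSSC : ∀ i j, i ≠ j → Disjoint (f i '' Λ) (f j '' Λ))
    (hsupp : msupport μ = Λ)
    (hline : ∀ (x v : EuclideanSpace ℝ (Fin 2)), v ≠ 0 →
      ¬ msupport μ ⊆ {y | ∃ c : ℝ, y = x + c • v}) :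
    ∃ c : ℝ≥0∞, 0 < c ∧ ∀ v : EuclideanSpace ℝ (Fin 2), ‖v‖ = 1 →
      c ≤ dimHMeasure (μ.map (fun x => ⟪x, v⟫)) := by
  classical
  haveI : Nonempty (Fin q) := ⟨⟨0, hq⟩⟩
  have hgm : ∀ v : EuclideanSpace ℝ (Fin 2), Measurable (fun x : EuclideanSpace ℝ (Fin 2) => ⟪x, v⟫) :=
    fun v => (continuous_id.inner continuous_const).measurable
  have hΛnull : μ Λᶜ = 0 := by
    have := msupport_compl_null μ
    rwa [hsupp] at this
  obtain ⟨x₀, hx₀⟩ := hΛne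
  set D : ℝ := Metric.diam Λ with hD
  have hD0 : 0 ≤ D := Metric.diam_nonneg
  -- the direction-gap function
  set Φ : EuclideanSpace ℝ (Fin 2) → ℝ := fun v => ∑ ij : Fin q × Fin q, |⟪t ij.1 - t ij.2, v⟫| with hΦdef
  have hΦcont : Continuous Φ := by
    apply continuous_finset_sum
    intro ij _
    exact (Continuous.inner continuous_const continuous_id).abs
  have hΦnonneg : ∀ v, 0 ≤ Φ v := fun v => Finset.sum_nonneg fun ij _ => abs_nonneg _
  -- Φ is positive on unit vectors, else the support would lie on a line
  have hΦpos : ∀ v : EuclideanSpace ℝ (Fin 2), ‖v‖ = 1 → 0 < Φ v := by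
    intro v hv
    rcases (hΦnonneg v).lt_or_eq with h | h
    · exact h
    exfalso
    have hterms : ∀ i j : Fin q, ⟪t i, v⟫ = ⟪t j, v⟫ := by
      intro i j
      have hz := (Finset.sum_eq_zero_iff_of_nonneg (fun ij _ => abs_nonneg _)).mp h.symm
        (i, j) (Finset.mem_univ _)
      have : ⟪t i - t j, v⟫ = 0 := abs_eq_zero.mp hz
      rw [inner_sub_left] at this
      linarith
    set β : ℝ := ⟪t ⟨0, hq⟩, v⟫ with hβ
    have hβall : ∀ i, ⟪t i, v⟫ = β := fun i => hterms i ⟨0, hq⟩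
    set c₀ : ℝ := β / (1 - lam) with hc₀def
    have h1lam : (1 : ℝ) - lam ≠ 0 := by linarith
    have hc₀ : lam * c₀ + β = c₀ := by
      have h' : c₀ * (1 - lam) = β := by rw [hc₀def]; exact div_mul_cancel₀ β h1lam
      linear_combination -h'
    set h : EuclideanSpace ℝ (Fin 2) → ℝ := fun x => |⟪x, v⟫ - c₀| with hhdef
    have hhcont : Continuous h := ((Continuous.inner continuous_id continuous_const).sub
      continuous_const).abs
    obtain ⟨z, hz, hzmax⟩ := hΛcomp.exists_isMaxOn ⟨x₀, hx₀⟩ hhcont.continuousOn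
    have hzim : z ∈ ⋃ i, f i '' Λ := hattr ▸ hz
    obtain ⟨i, y, hy, hfy⟩ := by
      simpa only [mem_iUnion, mem_image] using hzim
    have hstep : h z = lam * h y := by
      rw [← hfy, hhdef]
      simp only [hf]
      rw [inner_add_left, real_inner_smul_left, hβall i]
      have : lam * ⟪y, v⟫ + β - c₀ = lam * (⟪y, v⟫ - c₀) := by
        linear_combination hc₀
      rw [this, abs_mul, abs_of_pos hlam0]
    have hzy : h y ≤ h z := hzmax hy
    have hz0 : h z = 0 := by
      have h1 : h z ≤ lam * h z := by
        calc h z = lam * h y := hstep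
          _ ≤ lam * h z := mul_le_mul_of_nonneg_left hzy hlam0.le
      have h2 : 0 ≤ h z := abs_nonneg _
      nlinarith
    have hall0 : ∀ x ∈ Λ, ⟪x, v⟫ = c₀ := by
      intro x hx
      have := (hzmax hx).trans hz0.le
      have h2 : 0 ≤ h x := abs_nonneg _
      have : h x = 0 := le_antisymm this h2
      have := abs_eq_zero.mp this
      linarith
    have hvne : v ≠ 0 := by
      intro hv0
      rw [hv0] at hv
      simp at hv
    obtain ⟨u, hu0, huspan⟩ := perp_vector v hvne
    apply hline (c₀ • v) u hu0
    rw [hsupp]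
    intro x hx
    have hxv : ⟪x - c₀ • v, v⟫ = 0 := by
      rw [inner_sub_left, real_inner_smul_left, hall0 x hx,
        real_inner_self_eq_norm_sq, hv]
      ring
    obtain ⟨c, hc⟩ := huspan _ hxv
    exact ⟨c, by rw [← hc]; abel⟩
  -- uniform lower bound η by compactness of the sphere
  have hsphne : (sphere (0 : EuclideanSpace ℝ (Fin 2)) 1).Nonempty := NormedSpace.sphere_nonempty.mpr zero_le_one
  obtain ⟨vstar, hvstar, hvmin⟩ :=
    (isCompact_sphere (0 : EuclideanSpace ℝ (Fin 2)) 1).exists_isMinOn hsphne hΦcont.continuousOn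
  set η' : ℝ := Φ vstar with hη'def
  have hη'pos : 0 < η' := hΦpos vstar (mem_sphere_zero_iff_norm.mp hvstar)
  have hmin : ∀ v : EuclideanSpace ℝ (Fin 2), ‖v‖ = 1 → η' ≤ Φ v := by
    intro v hv
    exact hvmin (mem_sphere_zero_iff_norm.mpr hv)
  set η : ℝ := η' / (q * q) with hηdef
  have hqq : (0 : ℝ) < q * q := by positivity
  have hη : 0 < η := div_pos hη'pos hqq
  have hpair : ∀ v : EuclideanSpace ℝ (Fin 2), ‖v‖ = 1 → ∃ ij : Fin q × Fin q, η ≤ |⟪t ij.1 - t ij.2, v⟫| := by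
    intro v hv
    by_contra hcon
    push_neg at hcon
    have hlt : Φ v < ∑ _ij : Fin q × Fin q, η :=
      Finset.sum_lt_sum_of_nonempty Finset.univ_nonempty fun ij _ => hcon ij
    rw [Finset.sum_const, Finset.card_univ, Fintype.card_prod, Fintype.card_fin,
      nsmul_eq_mul] at hlt
    have : (q * q : ℝ) * η = η' := by
      rw [hηdef]
      field_simp
    rw [Nat.cast_mul] at hlt
    rw [this] at hlt
    exact absurd (hmin v hv) (not_le.mpr hlt)
  -- probability weights: minimum
  have hfne : (Finset.univ : Finset (Fin q)).Nonempty := ⟨⟨0, hq⟩, Finset.mem_univ _⟩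
  set pmin : ℝ≥0∞ := Finset.univ.inf' hfne p with hpmindef
  have hpmin_le : ∀ i, pmin ≤ p i := fun i => Finset.inf'_le p (Finset.mem_univ i)
  have hpmin_pos : 0 < pmin := by
    obtain ⟨i, _, hi⟩ := Finset.exists_mem_eq_inf' hfne p
    rw [hpmindef, hi]
    exact hp i
  have hpmin_le_one : pmin ≤ 1 := by
    refine (hpmin_le ⟨0, hq⟩).trans ?_
    rw [← hpsum]
    exact Finset.single_le_sum (fun i _ => zero_le) (Finset.mem_univ _)
  set θ : ℝ≥0∞ := 1 - pmin with hθdef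
  have hθ_le_one : θ ≤ 1 := tsub_le_self
  have hθ_ne_top : θ ≠ ∞ := (hθ_le_one.trans_lt ENNReal.one_lt_top).ne
  have hθ_lt_one : θ < 1 := ENNReal.sub_lt_self ENNReal.one_ne_top one_ne_zero hpmin_pos.ne'
  -- choice of the level (n₀ + 1) = n₀ + 1
  set C0 : ℝ := η / 4 + 2 * D with hC0def
  have hC0 : 0 < C0 := by positivity
  obtain ⟨n₀, hn₀⟩ := exists_pow_lt_of_lt_one (div_pos hη hC0) hlam1
  have hlm : 0 < lam ^ (n₀ + 1) := pow_pos hlam0 (n₀ + 1)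
  have hmC0 : lam ^ (n₀ + 1) * C0 < η := by
    have h1 : lam ^ (n₀ + 1) ≤ lam ^ n₀ := pow_le_pow_of_le_one hlam0.le hlam1.le (Nat.le_succ n₀)
    calc lam ^ (n₀ + 1) * C0 ≤ lam ^ n₀ * C0 := mul_le_mul_of_nonneg_right h1 hC0.le
      _ < (η / C0) * C0 := mul_lt_mul_of_pos_right hn₀ hC0
      _ = η := div_mul_cancel₀ η hC0.ne'
  set η8 : ℝ := η / 8 with hη8def
  have hη8 : 0 < η8 := by positivity
  set Lm : ℝ := lam ^ (n₀ + 1) with hLmdef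
  have hLm0 : 0 < Lm := hlm
  have hLm1 : Lm < 1 := pow_lt_one₀ hlam0.le hlam1 (Nat.succ_ne_zero n₀)
  set θr : ℝ := θ.toReal with hθrdef
  have hθr0 : 0 ≤ θr := ENNReal.toReal_nonneg
  have hθr1 : θr < 1 := by
    rw [hθrdef]
    rw [← ENNReal.toReal_one]
    exact ENNReal.toReal_strict_mono ENNReal.one_ne_top hθ_lt_one
  -- exponent d
  obtain ⟨d, hd0, hdθ⟩ : ∃ d : ℝ, 0 < d ∧ θr < Lm ^ d := by
    rcases hθr0.lt_or_eq with h0 | h0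
    · refine ⟨Real.log θr / (2 * Real.log Lm), ?_, ?_⟩
      · apply div_pos_iff.mpr
        right
        constructor
        · exact Real.log_neg h0 hθr1
        · have := Real.log_neg hLm0 hLm1
          linarith
      · have hlogLm : Real.log Lm ≠ 0 := (Real.log_neg hLm0 hLm1).ne
        rw [Real.rpow_def_of_pos hLm0]
        have harg : Real.log Lm * (Real.log θr / (2 * Real.log Lm)) = Real.log θr / 2 := by
          field_simp
        rw [harg]
        nth_rewrite 1 [← Real.exp_log h0]
        apply Real.exp_lt_exp.mpr
        have hlogθ : Real.log θr < 0 := Real.log_neg h0 hθr1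
        linarith
    · exact ⟨1, one_pos, by rw [← h0]; exact Real.rpow_pos_of_pos hLm0 1⟩
  -- threshold k₀
  obtain ⟨k₀, hk₀⟩ : ∃ k₀ : ℕ, ∀ k, k₀ ≤ k → θr ^ k ≤ (Lm ^ (k + 1) * η8) ^ d := by
    set γ : ℝ := Lm ^ d with hγdef
    have hγ0 : 0 < γ := Real.rpow_pos_of_pos hLm0 d
    set e₀ : ℝ := γ * η8 ^ d with he₀def
    have he₀ : 0 < e₀ := mul_pos hγ0 (Real.rpow_pos_of_pos hη8 d)
    set r : ℝ := θr / γ with hrdef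
    have hr0 : 0 ≤ r := div_nonneg hθr0 hγ0.le
    have hr1 : r < 1 := (div_lt_one hγ0).mpr hdθ
    obtain ⟨n, hn⟩ := exists_pow_lt_of_lt_one he₀ hr1
    refine ⟨n, fun k hk => ?_⟩
    have h1 : θr ^ k = r ^ k * γ ^ k := by
      rw [← mul_pow, div_mul_cancel₀ _ hγ0.ne']
    have h2 : r ^ k ≤ r ^ n := pow_le_pow_of_le_one hr0 hr1.le hk
    have h3 : θr ^ k ≤ e₀ * γ ^ k := by
      rw [h1]
      exact mul_le_mul_of_nonneg_right (h2.trans hn.le) (pow_nonneg hγ0.le k)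
    have h4 : (Lm ^ (k + 1) * η8) ^ d = γ ^ (k + 1) * η8 ^ d := by
      rw [Real.mul_rpow (pow_nonneg hLm0.le _) hη8.le]
      congr 1
      rw [← Real.rpow_natCast Lm (k + 1), ← Real.rpow_mul hLm0.le,
        mul_comm ((k + 1 : ℕ) : ℝ) d, Real.rpow_mul hLm0.le, Real.rpow_natCast]
    rw [h4]
    calc θr ^ k ≤ e₀ * γ ^ k := h3
      _ = γ ^ (k + 1) * η8 ^ d := by rw [he₀def]; ring
  -- the answer
  refine ⟨ENNReal.ofReal d, ENNReal.ofReal_pos.mpr hd0, ?_⟩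
  intro v hv
  set g : EuclideanSpace ℝ (Fin 2) → ℝ := fun x => ⟪x, v⟫ with hgdef
  set ν : Measure ℝ := μ.map g with hνdef
  haveI : IsProbabilityMeasure ν := Measure.isProbabilityMeasure_map (hgm v).aemeasurable
  obtain ⟨⟨i0, j0⟩, hij⟩ := hpair v hv
  have hgbound : ∀ x ∈ Λ, |g x - g x₀| ≤ D := by
    intro x hx
    have heq : g x - g x₀ = ⟪x - x₀, v⟫ := (inner_sub_left x x₀ v).symm
    rw [heq]
    calc |⟪x - x₀, v⟫| ≤ ‖x - x₀‖ * ‖v‖ := abs_real_inner_le_norm _ _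
      _ = ‖x - x₀‖ := by rw [hv, mul_one]
      _ = dist x x₀ := (dist_eq_norm _ _).symm
      _ ≤ D := Metric.dist_le_diam_of_mem hΛcomp.isBounded hx hx₀
  -- the key decay estimate
  have decay : ∀ (k : ℕ) (c : ℝ), ν (Metric.closedBall c (Lm ^ k * η8)) ≤ θ ^ k := by
    intro k
    induction k with
    | zero =>
      intro c
      calc ν (Metric.closedBall c (Lm ^ 0 * η8)) ≤ ν univ := measure_mono (subset_univ _)
        _ = 1 := measure_univ
        _ = θ ^ 0 := (pow_zero θ).symm
    | succ k ih =>
      intro c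
      have hball : MeasurableSet (Metric.closedBall c (Lm ^ (k + 1) * η8)) :=
        measurableSet_closedBall
      set B : Set (EuclideanSpace ℝ (Fin 2)) := g ⁻¹' Metric.closedBall c (Lm ^ (k + 1) * η8) with hBdef
      have hBmeas : MeasurableSet B := hball.preimage (hgm v)
      have hmap : ν (Metric.closedBall c (Lm ^ (k + 1) * η8)) = μ B :=
        Measure.map_apply (hgm v) hball
      have hexp := expandSS lam t f hf p μ hμ (n₀ + 1) B hBmeas
      set τ : (Fin (n₀ + 1) → Fin q) → EuclideanSpace ℝ (Fin 2) := fun w => ∑ kk : Fin (n₀ + 1), lam ^ (kk : ℕ) • t (w kk)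
        with hτdef
      set T : (Fin (n₀ + 1) → Fin q) → ℝ≥0∞ := fun w => μ ((fun x => (lam ^ (n₀ + 1)) • x + τ w) ⁻¹' B)
        with hTdef
      -- each term is at most θ^k
      have hT : ∀ w, T w ≤ θ ^ k := by
        intro w
        have hset : (fun x => (lam ^ (n₀ + 1)) • x + τ w) ⁻¹' B
            = g ⁻¹' Metric.closedBall ((c - ⟪τ w, v⟫) / Lm) (Lm ^ k * η8) := by
          ext x
          simp only [hBdef, mem_preimage, Metric.mem_closedBall, Real.dist_eq, hgdef]
          rw [inner_add_left, real_inner_smul_left]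
          have hrw : lam ^ (n₀ + 1) * ⟪x, v⟫ + ⟪τ w, v⟫ - c
              = Lm * (⟪x, v⟫ - (c - ⟪τ w, v⟫) / Lm) := by
            field_simp [hLmdef]
            ring
          rw [hrw, abs_mul, abs_of_pos hLm0,
            show Lm ^ (k + 1) * η8 = Lm * (Lm ^ k * η8) by ring]
          exact mul_le_mul_iff_right₀ hLm0
        rw [hTdef]
        simp only
        rw [hset, ← Measure.map_apply (hgm v) measurableSet_closedBall, ← hνdef]
        exact ih _
      -- exclusion: for every tail, one of the two leading symbols gives measure zero
      have hexcl : ∀ u : Fin n₀ → Fin q,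
          T (Fin.cons i0 u) = 0 ∨ T (Fin.cons j0 u) = 0 := by
        intro u
        by_contra hcon
        push_neg at hcon
        obtain ⟨h1, h2⟩ := hcon
        have hmem : ∀ b : Fin q, T (Fin.cons b u) ≠ 0 →
            ∃ x ∈ Λ, |Lm * g x + ⟪τ (Fin.cons b u), v⟫ - c| ≤ Lm ^ (k + 1) * η8 := by
          intro b hb
          set S : Set (EuclideanSpace ℝ (Fin 2)) := (fun x => (lam ^ (n₀ + 1)) • x + τ (Fin.cons b u)) ⁻¹' B with hSdef
          have hSΛ : μ (S ∩ Λ) ≠ 0 := by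
            intro h0
            apply hb
            rw [hTdef]
            simp only
            rw [← hSdef]
            have hsub : S ⊆ (S ∩ Λ) ∪ Λᶜ := by
              intro x hx
              by_cases hxΛ : x ∈ Λ
              · exact Or.inl ⟨hx, hxΛ⟩
              · exact Or.inr hxΛ
            refine le_antisymm ?_ zero_le
            calc μ S ≤ μ ((S ∩ Λ) ∪ Λᶜ) := measure_mono hsub
              _ ≤ μ (S ∩ Λ) + μ Λᶜ := measure_union_le _ _
              _ = 0 := by rw [h0, hΛnull, add_zero]
          obtain ⟨x, hxS, hxΛ⟩ := nonempty_of_measure_ne_zero hSΛ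
          refine ⟨x, hxΛ, ?_⟩
          have := hxS
          simp only [hSdef, hBdef, mem_preimage, Metric.mem_closedBall, Real.dist_eq,
            hgdef] at this
          rwa [inner_add_left, real_inner_smul_left, ← hLmdef] at this
        obtain ⟨x₁, hx₁Λ, hx₁⟩ := hmem i0 h1
        obtain ⟨x₂, hx₂Λ, hx₂⟩ := hmem j0 h2
        -- the two translation parts differ by exactly ⟪t i0 - t j0, v⟫
        have hτd : ⟪τ (Fin.cons i0 u), v⟫ - ⟪τ (Fin.cons j0 u), v⟫ = ⟪t i0 - t j0, v⟫ := by
          have hτc : ∀ b : Fin q, τ (Fin.cons b u)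
              = t b + ∑ kk : Fin n₀, lam ^ ((kk : ℕ) + 1) • t (u kk) := by
            intro b
            rw [hτdef]
            simp only
            rw [Fin.sum_univ_succ]
            simp [Fin.cons_zero, Fin.cons_succ]
          rw [hτc i0, hτc j0, inner_add_left, inner_add_left, inner_sub_left]
          ring
        set a₁ : ℝ := ⟪τ (Fin.cons i0 u), v⟫
        set a₂ : ℝ := ⟪τ (Fin.cons j0 u), v⟫
        have hηle : η ≤ |a₁ - a₂| := by rw [hτd]; exact hij
        have hid : a₁ - a₂ = (Lm * g x₁ + a₁ - c) - (Lm * g x₂ + a₂ - c)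
            - Lm * (g x₁ - g x₀) + Lm * (g x₂ - g x₀) := by ring
        have hb1 := abs_le.mp hx₁
        have hb2 := abs_le.mp hx₂
        have hg1 := abs_le.mp (hgbound x₁ hx₁Λ)
        have hg2 := abs_le.mp (hgbound x₂ hx₂Λ)
        have hg1' : -(Lm * D) ≤ Lm * (g x₁ - g x₀) ∧ Lm * (g x₁ - g x₀) ≤ Lm * D := by
          constructor
          · nlinarith [hg1.1, hLm0]
          · nlinarith [hg1.2, hLm0]
        have hg2' : -(Lm * D) ≤ Lm * (g x₂ - g x₀) ∧ Lm * (g x₂ - g x₀) ≤ Lm * D := by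
          constructor
          · nlinarith [hg2.1, hLm0]
          · nlinarith [hg2.2, hLm0]
        have hρ : Lm ^ (k + 1) * η8 ≤ Lm * η8 := by
          have : Lm ^ (k + 1) ≤ Lm ^ 1 := pow_le_pow_of_le_one hLm0.le hLm1.le
            (Nat.one_le_iff_ne_zero.mpr (Nat.succ_ne_zero k))
          rw [pow_one] at this
          exact mul_le_mul_of_nonneg_right this hη8.le
        have hkey : 2 * (Lm * η8) + Lm * D + Lm * D < η := by
          have : Lm * C0 < η := hmC0
          rw [hC0def] at this
          rw [hη8def]
          nlinarith
        rcases abs_cases (a₁ - a₂) with ⟨habs, _⟩ | ⟨habs, _⟩ <;> rw [habs] at hηle <;>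
          linarith [hb1.1, hb1.2, hb2.1, hb2.2, hg1'.1, hg1'.2, hg2'.1, hg2'.2, hρ]
      -- sum over tails is one
      have hsum_tail : ∑ u : Fin n₀ → Fin q, (∏ kk, p (u kk)) = 1 := by
        have hexp0 := expandSS lam t f hf p μ hμ n₀ univ MeasurableSet.univ
        simp only [preimage_univ, measure_univ, mul_one] at hexp0
        exact hexp0.symm
      -- per-tail bound
      have hstep : ∀ u : Fin n₀ → Fin q,
          ∑ b : Fin q, p b * T (Fin.cons b u) ≤ (1 - pmin) * θ ^ k := by
        intro u
        obtain ⟨bstar, hbstar⟩ : ∃ b : Fin q, T (Fin.cons b u) = 0 := by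
          rcases hexcl u with h | h
          · exact ⟨i0, h⟩
          · exact ⟨j0, h⟩
        have hsplit : ∑ b : Fin q, p b * T (Fin.cons b u)
            = ∑ b ∈ Finset.univ.erase bstar, p b * T (Fin.cons b u) := by
          rw [← Finset.sum_erase_add _ _ (Finset.mem_univ bstar), hbstar, mul_zero, add_zero]
        rw [hsplit]
        have herase : ∑ b ∈ Finset.univ.erase bstar, p b ≤ 1 - pmin := by
          apply ENNReal.le_sub_of_add_le_right ((hpmin_le_one.trans_lt ENNReal.one_lt_top).ne)
          calc (∑ b ∈ Finset.univ.erase bstar, p b) + pmin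
              ≤ (∑ b ∈ Finset.univ.erase bstar, p b) + p bstar :=
                add_le_add_right (hpmin_le bstar) _
            _ = ∑ b : Fin q, p b := Finset.sum_erase_add _ _ (Finset.mem_univ bstar)
            _ = 1 := hpsum
        calc ∑ b ∈ Finset.univ.erase bstar, p b * T (Fin.cons b u)
            ≤ ∑ b ∈ Finset.univ.erase bstar, p b * θ ^ k :=
              Finset.sum_le_sum fun b _ => mul_le_mul_right (hT _) _
          _ = (∑ b ∈ Finset.univ.erase bstar, p b) * θ ^ k := by rw [Finset.sum_mul]
          _ ≤ (1 - pmin) * θ ^ k := mul_le_mul_left herase _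
      -- combine
      rw [hmap, hexp]
      rw [← Equiv.sum_comp (Fin.consEquiv (fun _ : Fin (n₀ + 1) => Fin q))]
      rw [Fintype.sum_prod_type]
      have hterm : ∀ (b : Fin q) (u : Fin n₀ → Fin q),
          (∏ kk, p ((Fin.consEquiv (fun _ : Fin (n₀ + 1) => Fin q)) (b, u) kk)) *
            μ ((fun x => (lam ^ (n₀ + 1)) • x + ∑ kk : Fin (n₀ + 1), lam ^ (kk : ℕ) •
              t ((Fin.consEquiv (fun _ : Fin (n₀ + 1) => Fin q)) (b, u) kk)) ⁻¹' B)
          = (p b * ∏ kk, p (u kk)) * T (Fin.cons b u) := by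
        intro b u
        have h2 : ((Fin.consEquiv (fun _ : Fin (n₀ + 1) => Fin q)) (b, u) : Fin (n₀ + 1) → Fin q)
            = Fin.cons b u := by
          simp [Fin.consEquiv]
        rw [h2]
        have h1 : (∏ kk : Fin (n₀ + 1), p ((Fin.cons b u : Fin (n₀ + 1) → Fin q) kk))
            = p b * ∏ kk, p (u kk) := by
          rw [Fin.prod_univ_succ]
          simp
        rw [h1]
      calc ∑ b : Fin q, ∑ u : Fin n₀ → Fin q,
            (∏ kk, p ((Fin.consEquiv (fun _ : Fin (n₀ + 1) => Fin q)) (b, u) kk)) *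
              μ ((fun x => (lam ^ (n₀ + 1)) • x + ∑ kk : Fin (n₀ + 1), lam ^ (kk : ℕ) •
                t ((Fin.consEquiv (fun _ : Fin (n₀ + 1) => Fin q)) (b, u) kk)) ⁻¹' B)
          = ∑ b : Fin q, ∑ u : Fin n₀ → Fin q, (p b * ∏ kk, p (u kk)) * T (Fin.cons b u) := by
            refine Finset.sum_congr rfl fun b _ => Finset.sum_congr rfl fun u _ => hterm b u
        _ = ∑ u : Fin n₀ → Fin q, ∑ b : Fin q, (p b * ∏ kk, p (u kk)) * T (Fin.cons b u) :=
            Finset.sum_comm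
        _ = ∑ u : Fin n₀ → Fin q, (∏ kk, p (u kk)) * ∑ b : Fin q, p b * T (Fin.cons b u) := by
            refine Finset.sum_congr rfl fun u _ => ?_
            rw [Finset.mul_sum]
            refine Finset.sum_congr rfl fun b _ => ?_
            ring
        _ ≤ ∑ u : Fin n₀ → Fin q, (∏ kk, p (u kk)) * ((1 - pmin) * θ ^ k) :=
            Finset.sum_le_sum fun u _ => mul_le_mul_right (hstep u) _
        _ = (∑ u : Fin n₀ → Fin q, (∏ kk, p (u kk))) * ((1 - pmin) * θ ^ k) := by
            rw [Finset.sum_mul]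
        _ = θ ^ (k + 1) := by
            rw [hsum_tail, one_mul, ← hθdef, pow_succ]
            ring
  -- Frostman-type bound and conclusion
  have hεpos : (0 : ℝ≥0∞) < ENNReal.ofReal (Lm ^ k₀ * η8) := by
    apply ENNReal.ofReal_pos.mpr
    positivity
  have hfrost : ∀ s : Set ℝ, EMetric.diam s ≤ ENNReal.ofReal (Lm ^ k₀ * η8) →
      ν s ≤ EMetric.diam s ^ d := by
    intro s hs
    have hdiamne : EMetric.diam s ≠ ⊤ := (hs.trans_lt ENNReal.ofReal_lt_top).ne
    rcases eq_empty_or_nonempty s with rfl | ⟨x, hx⟩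
    · simp
    have hDs0 : 0 ≤ Metric.diam s := Metric.diam_nonneg
    have hbnd : Bornology.IsBounded s := Metric.isBounded_iff_ediam_ne_top.mpr hdiamne
    have hsub : s ⊆ Metric.closedBall x (Metric.diam s) := fun y hy =>
      Metric.mem_closedBall.mpr (Metric.dist_le_diam_of_mem hbnd hy hx)
    have hDsε : Metric.diam s ≤ Lm ^ k₀ * η8 := by
      have h1 : (EMetric.diam s).toReal ≤ (ENNReal.ofReal (Lm ^ k₀ * η8)).toReal :=
        ENNReal.toReal_mono ENNReal.ofReal_ne_top hs
      rwa [ENNReal.toReal_ofReal (by positivity)] at h1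
    rcases hDs0.lt_or_eq with h0 | h0
    swap
    · -- diam s = 0
      have hνk : ∀ k : ℕ, ν s ≤ θ ^ k := by
        intro k
        refine le_trans (measure_mono (hsub.trans (Metric.closedBall_subset_closedBall ?_)))
          (decay k x)
        rw [← h0]
        positivity
      have hν0 : ν s ≤ 0 :=
        ge_of_tendsto (ENNReal.tendsto_pow_atTop_nhds_zero_of_lt_one hθ_lt_one)
          (Eventually.of_forall hνk)
      exact hν0.trans zero_le
    -- 0 < diam s
    have hex : ∃ n : ℕ, Lm ^ (n + 1) * η8 < Metric.diam s := by
      obtain ⟨N, hN⟩ := exists_pow_lt_of_lt_one (div_pos h0 hη8) hLm1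
      refine ⟨N, ?_⟩
      have h1 : Lm ^ (N + 1) ≤ Lm ^ N := pow_le_pow_of_le_one hLm0.le hLm1.le (Nat.le_succ N)
      calc Lm ^ (N + 1) * η8 ≤ Lm ^ N * η8 := mul_le_mul_of_nonneg_right h1 hη8.le
        _ < (Metric.diam s / η8) * η8 := mul_lt_mul_of_pos_right hN hη8
        _ = Metric.diam s := div_mul_cancel₀ _ hη8.ne'
    set k : ℕ := Nat.find hex with hkdef
    have hk1 : Lm ^ (k + 1) * η8 < Metric.diam s := Nat.find_spec hex
    have hkub : Metric.diam s ≤ Lm ^ k * η8 := by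
      rcases Nat.eq_zero_or_pos k with hk0 | hk0
      · rw [hk0, pow_zero, one_mul]
        refine hDsε.trans ?_
        have : Lm ^ k₀ ≤ 1 := pow_le_one₀ (le_of_lt hLm0) hLm1.le
        nlinarith
      · have hmin' : ¬(Lm ^ (k - 1 + 1) * η8 < Metric.diam s) :=
          Nat.find_min hex (Nat.sub_lt hk0 one_pos)
        rw [Nat.sub_add_cancel hk0] at hmin'
        exact not_lt.mp hmin'
    have hkk₀ : k₀ ≤ k := by
      by_contra hlt'
      push_neg at hlt'
      have h1 : Lm ^ k₀ ≤ Lm ^ (k + 1) := pow_le_pow_of_le_one hLm0.le hLm1.le hlt'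
      have h2 : Lm ^ k₀ * η8 ≤ Lm ^ (k + 1) * η8 := mul_le_mul_of_nonneg_right h1 hη8.le
      linarith
    have h1 : ν s ≤ θ ^ k :=
      le_trans (measure_mono (hsub.trans (Metric.closedBall_subset_closedBall hkub)))
        (decay k x)
    have h2 : θ ^ k = ENNReal.ofReal (θr ^ k) := by
      rw [ENNReal.ofReal_pow hθr0, hθrdef, ENNReal.ofReal_toReal hθ_ne_top]
    have h3 : θr ^ k ≤ (Lm ^ (k + 1) * η8) ^ d := hk₀ k hkk₀
    have h4 : (Lm ^ (k + 1) * η8) ^ d ≤ Metric.diam s ^ d :=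
      Real.rpow_le_rpow (by positivity) hk1.le hd0.le
    have h5 : ENNReal.ofReal (Metric.diam s) = EMetric.diam s := by
      rw [Metric.diam]; exact ENNReal.ofReal_toReal hdiamne
    calc ν s ≤ θ ^ k := h1
      _ = ENNReal.ofReal (θr ^ k) := h2
      _ ≤ ENNReal.ofReal (Metric.diam s ^ d) := ENNReal.ofReal_le_ofReal (h3.trans h4)
      _ = ENNReal.ofReal (Metric.diam s) ^ d := (ENNReal.ofReal_rpow_of_pos h0).symm
      _ = EMetric.diam s ^ d := by rw [h5]
  have hle : ν ≤ μH[d] := Measure.le_hausdorffMeasure d ν _ hεpos hfrost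
  -- conclude the dimension bound
  rw [dimHMeasure]
  refine le_iInf fun A => le_iInf fun hA => ?_
  by_contra hlt
  push_neg at hlt
  have hd' : dimH A < ((d.toNNReal : ℝ≥0) : ℝ≥0∞) := by
    rwa [ENNReal.ofReal] at hlt
  have h0 : μH[((d.toNNReal : ℝ≥0) : ℝ)] A = 0 := hausdorffMeasure_of_dimH_lt hd'
  rw [Real.coe_toNNReal d hd0.le] at h0
  have hνA : ν A ≤ 0 := by
    calc ν A ≤ μH[d] A := Measure.le_iff'.mp hle A
      _ = 0 := h0
  rw [hνdef, hgdef] at hνA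
  exact absurd hA (not_lt.mpr hνA)
end

section
/- Let μ be a homogeneous homothetic self-similar measure with strong separation condition in ℝ² whose support is not contained in any line, with probability weights p_1,...,p_q, contraction ratio λ, and let p_min = min_i p_i. Then there exists N ≥ 1 such that for every orthogonal projection π ∈ Π_{2,1} and every x in the support of π_*μ, the lower local dimension of π_*μ at x is at least log(1 - p_min^N)/(N log λ) > 0. -/
open MeasureTheory Metric Filter Set
open scoped ENNReal NNReal Topology RealInnerProductSpace

private lemma map_finsum_aux {X Y : Type*} [MeasurableSpace X] [MeasurableSpace Y]
    {f : X → Y} (hf : Measurable f) {ι : Type*} (s : Finset ι) (μ : ι → Measure X) :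
    (∑ i ∈ s, μ i).map f = ∑ i ∈ s, (μ i).map f := by
  classical
  induction s using Finset.induction with
  | empty => simp
  | insert _ _ h ih =>
    rw [Finset.sum_insert h, Finset.sum_insert h, Measure.map_add _ _ hf, ih]

private lemma tendsto_aux (A B C : ℝ) (hB : B ≠ 0) :
    Tendsto (fun n : ℕ => ((n : ℝ) * A) / ((n : ℝ) * B + C)) atTop (𝓝 (A / B)) := by
  have h1 : Tendsto (fun n : ℕ => (C / (n : ℝ))) atTop (𝓝 0) :=
    tendsto_const_div_atTop_nhds_zero_nat C
  have h2 : Tendsto (fun n : ℕ => A / (B + C / (n : ℝ))) atTop (𝓝 (A / (B + 0))) :=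
    tendsto_const_nhds.div (tendsto_const_nhds.add h1) (by simpa using hB)
  rw [add_zero] at h2
  apply h2.congr'
  filter_upwards [eventually_gt_atTop 0] with n hn
  have hn' : (n : ℝ) ≠ 0 := Nat.cast_ne_zero.2 hn.ne'
  field_simp

private lemma iter_struct {q : ℕ} (lam : ℝ)
    (t : Fin q → EuclideanSpace ℝ (Fin 2))
    (f : Fin q → EuclideanSpace ℝ (Fin 2) → EuclideanSpace ℝ (Fin 2))
    (hf : ∀ i x, f i x = lam • x + t i)
    (p : Fin q → ℝ) (hp : ∀ i, 0 < p i) (hpsum : ∑ i, p i = 1)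
    (pmin : ℝ) (hpmin : ∀ i, pmin ≤ p i) (hpmin0 : 0 < pmin)
    (μ : Measure (EuclideanSpace ℝ (Fin 2)))
    (hμ : μ = ∑ i, ENNReal.ofReal (p i) • μ.map (f i))
    (Λ : Set (EuclideanSpace ℝ (Fin 2)))
    (hattr : Λ = ⋃ i, f i '' Λ) (n : ℕ) :
    ∃ (m : ℕ) (g : Fin m → EuclideanSpace ℝ (Fin 2) → EuclideanSpace ℝ (Fin 2))
      (c : Fin m → ℝ) (T : Fin m → EuclideanSpace ℝ (Fin 2)),
      (∀ a, pmin ^ n ≤ c a) ∧ (∑ a, c a = 1) ∧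
      (∀ a x, g a x = lam ^ n • x + T a) ∧
      μ = ∑ a, ENNReal.ofReal (c a) • μ.map (g a) ∧
      Λ = ⋃ a, g a '' Λ := by
  induction n with
  | zero =>
    refine ⟨1, fun _ => id, fun _ => 1, fun _ => 0, by simp, by simp, by simp, ?_,
      by simp [Set.iUnion_const]⟩
    simp [Measure.map_id]
  | succ n ih =>
    obtain ⟨m, g, c, T, hc, hcsum, hg, hid, hcov⟩ := ih
    have hgcont : ∀ a, Continuous (g a) := by
      intro a
      have : g a = fun x => lam ^ n • x + T a := funext (hg a)
      rw [this]
      fun_prop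
    have hfcont : ∀ i, Continuous (f i) := by
      intro i
      have : f i = fun x => lam • x + t i := funext (hf i)
      rw [this]
      fun_prop
    let e : Fin q × Fin m ≃ Fin (q * m) := finProdFinEquiv
    refine ⟨q * m, fun j => f (e.symm j).1 ∘ g (e.symm j).2,
      fun j => p (e.symm j).1 * c (e.symm j).2,
      fun j => lam • T (e.symm j).2 + t (e.symm j).1, ?_, ?_, ?_, ?_, ?_⟩
    · intro j
      rw [pow_succ']
      exact mul_le_mul (hpmin _) (hc _) (pow_nonneg hpmin0.le n) (hp _).le
    · have h1 : ∑ j : Fin (q * m), p (e.symm j).1 * c (e.symm j).2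
          = ∑ z : Fin q × Fin m, p z.1 * c z.2 :=
        Fintype.sum_equiv e.symm _ _ (fun j => rfl)
      show ∑ j : Fin (q * m), p (e.symm j).1 * c (e.symm j).2 = 1
      rw [h1, Fintype.sum_prod_type, ← Finset.sum_mul_sum, hpsum, hcsum, mul_one]
    · intro j x
      simp only [Function.comp_apply, hf, hg]
      rw [smul_add, smul_smul, ← pow_succ']
      abel
    · have hmapi : ∀ i, μ.map (f i) = ∑ a, ENNReal.ofReal (c a) • μ.map (f i ∘ g a) := by
        intro i
        conv_lhs => rw [hid]
        rw [map_finsum_aux (hfcont i).measurable]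
        congr 1
        funext a
        rw [Measure.map_smul, Measure.map_map (hfcont i).measurable (hgcont a).measurable]
      show μ = ∑ j : Fin (q * m),
        ENNReal.ofReal (p (e.symm j).1 * c (e.symm j).2) • μ.map (f (e.symm j).1 ∘ g (e.symm j).2)
      have h1 : ∑ j : Fin (q * m),
          ENNReal.ofReal (p (e.symm j).1 * c (e.symm j).2) •
            μ.map (f (e.symm j).1 ∘ g (e.symm j).2)
          = ∑ z : Fin q × Fin m, ENNReal.ofReal (p z.1 * c z.2) • μ.map (f z.1 ∘ g z.2) :=
        Fintype.sum_equiv e.symm _ _ (fun j => rfl)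
      rw [h1, Fintype.sum_prod_type]
      conv_lhs => rw [hμ]
      congr 1
      funext i
      rw [hmapi i, Finset.smul_sum]
      congr 1
      funext a
      rw [smul_smul, ← ENNReal.ofReal_mul (hp i).le]
    · show Λ = ⋃ j : Fin (q * m), (f (e.symm j).1 ∘ g (e.symm j).2) '' Λ
      rw [e.symm.surjective.iUnion_comp (fun z => (f z.1 ∘ g z.2) '' Λ)]
      rw [Set.iUnion_prod']
      conv_lhs => rw [hattr]
      apply iUnion_congr
      intro i
      conv_lhs => rw [hcov]
      rw [image_iUnion]
      apply iUnion_congr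
      intro a
      rw [image_comp]

/-- Lower local dimension of a measure at a point. -/
noncomputable def lowerLocalDim {X : Type*} [MetricSpace X] [MeasurableSpace X]
    (μ : Measure X) (x : X) : ℝ :=
  liminf (fun r : ℝ => Real.log (μ (ball x r)).toReal / Real.log r) (nhdsWithin 0 (Ioi 0))

set_option maxHeartbeats 2000000 in
/-- A uniform lower bound `log(1 - p_min^N)/(N log λ)` for the lower local dimension of every
orthogonal projection of a homogeneous homothetic self-similar measure in `ℝ²` with strong
separation whose support is not contained in any line. -/
theorem lowerLocalDim_proj_HHSS_measure {q : ℕ} (hq : 0 < q)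
    (lam : ℝ) (hlam0 : 0 < lam) (hlam1 : lam < 1)
    (t : Fin q → EuclideanSpace ℝ (Fin 2))
    (f : Fin q → EuclideanSpace ℝ (Fin 2) → EuclideanSpace ℝ (Fin 2))
    (hf : ∀ i x, f i x = lam • x + t i)
    (p : Fin q → ℝ) (hp : ∀ i, 0 < p i) (hpsum : ∑ i, p i = 1)
    (pmin : ℝ) (hpmin : ∀ i, pmin ≤ p i) (hpmin' : ∃ i, p i = pmin)
    (μ : Measure (EuclideanSpace ℝ (Fin 2))) [IsProbabilityMeasure μ]
    (hμ : μ = ∑ i, ENNReal.ofReal (p i) • μ.map (f i))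
    (Λ : Set (EuclideanSpace ℝ (Fin 2)))
    (hΛcomp : IsCompact Λ) (hΛne : Λ.Nonempty)
    (hattr : Λ = ⋃ i, f i '' Λ)
    (hSSC : ∀ i j, i ≠ j → Disjoint (f i '' Λ) (f j '' Λ))
    (hsupp : msupport μ = Λ)
    (hline : ∀ (x v : EuclideanSpace ℝ (Fin 2)), v ≠ 0 →
      ¬ msupport μ ⊆ {y | ∃ c : ℝ, y = x + c • v}) :
    ∃ N : ℕ, 1 ≤ N ∧ 0 < Real.log (1 - pmin ^ N) / (N * Real.log lam) ∧
      ∀ v : EuclideanSpace ℝ (Fin 2), ‖v‖ = 1 →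
        ∀ x ∈ msupport (μ.map (fun y => ⟪y, v⟫)),
          Real.log (1 - pmin ^ N) / (N * Real.log lam)
            ≤ lowerLocalDim (μ.map (fun y => ⟪y, v⟫)) x := by
  classical
  obtain ⟨i0, hi0⟩ := hpmin'
  have hpmin0 : 0 < pmin := hi0 ▸ hp i0
  -- three non-collinear points in Λ
  obtain ⟨x1, hx1⟩ := hΛne
  have h2 : ∃ x2 ∈ Λ, x2 ≠ x1 := by
    by_contra h
    push_neg at h
    have hv : (EuclideanSpace.single (0 : Fin 2) (1:ℝ)) ≠ 0 := by
      intro hc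
      have := congrArg (fun w => w 0) hc
      simp [EuclideanSpace.single_apply] at this
    refine hline x1 _ hv ?_
    rw [hsupp]
    intro y hy
    exact ⟨0, by simp [h y hy]⟩
  obtain ⟨x2, hx2Λ, hx21⟩ := h2
  have h3 : ∃ x3 ∈ Λ, ∀ c : ℝ, x3 ≠ x1 + c • (x2 - x1) := by
    have h := hline x1 (x2 - x1) (sub_ne_zero.2 hx21)
    rw [hsupp] at h
    obtain ⟨x3, hx3Λ, hno⟩ := not_subset.1 h
    refine ⟨x3, hx3Λ, fun c hc => hno ⟨c, hc⟩⟩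
  obtain ⟨x3, hx3Λ, hx3⟩ := h3
  -- κ
  have key : ∀ v : EuclideanSpace ℝ (Fin 2), ‖v‖ = 1 →
      0 < max |⟪x2 - x1, v⟫| |⟪x3 - x1, v⟫| := by
    intro v hv
    by_contra hcon
    push_neg at hcon
    have h2' : ⟪x2 - x1, v⟫ = 0 := by
      have h := le_trans (le_max_left _ _) hcon
      exact abs_eq_zero.1 (le_antisymm h (abs_nonneg _))
    have h3' : ⟪x3 - x1, v⟫ = 0 := by
      have h := le_trans (le_max_right _ _) hcon
      exact abs_eq_zero.1 (le_antisymm h (abs_nonneg _))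
    have hvne : v ≠ 0 := by
      intro h0; rw [h0] at hv; simp at hv
    have hw2 : x2 - x1 ∈ (Submodule.span ℝ {v})ᗮ :=
      (Submodule.mem_orthogonal_singleton_iff_inner_left).2 h2'
    have hw3 : x3 - x1 ∈ (Submodule.span ℝ {v})ᗮ :=
      (Submodule.mem_orthogonal_singleton_iff_inner_left).2 h3'
    have hfr : Module.finrank ℝ ((Submodule.span ℝ {v})ᗮ) = 1 := by
      have h := Submodule.finrank_add_finrank_orthogonal (𝕜 := ℝ) (Submodule.span ℝ {v})
      rw [finrank_span_singleton hvne] at h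
      have h2 : Module.finrank ℝ (EuclideanSpace ℝ (Fin 2)) = 2 := by
        simp [finrank_euclideanSpace]
      omega
    have hsp : Submodule.span ℝ {x2 - x1} = (Submodule.span ℝ {v})ᗮ := by
      apply Submodule.eq_of_le_of_finrank_eq
      · rw [Submodule.span_le]; simpa using hw2
      · rw [finrank_span_singleton (sub_ne_zero.2 hx21), hfr]
    rw [← hsp] at hw3
    obtain ⟨cc, hcc⟩ := Submodule.mem_span_singleton.1 hw3
    refine hx3 cc ?_
    have h4 := hcc.symm
    rw [sub_eq_iff_eq_add] at h4
    rw [h4, add_comm]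
  obtain ⟨κ, hκpos, hκ⟩ : ∃ κ : ℝ, 0 < κ ∧ ∀ v : EuclideanSpace ℝ (Fin 2), ‖v‖ = 1 →
      κ ≤ max |⟪x2 - x1, v⟫| |⟪x3 - x1, v⟫| := by
    have hF : Continuous fun v : EuclideanSpace ℝ (Fin 2) =>
        max |⟪x2 - x1, v⟫| |⟪x3 - x1, v⟫| :=
      ((Continuous.inner continuous_const continuous_id).abs).max
        ((Continuous.inner continuous_const continuous_id).abs)
    have hsc : IsCompact (sphere (0 : EuclideanSpace ℝ (Fin 2)) 1) := isCompact_sphere 0 1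
    have hsne : (sphere (0 : EuclideanSpace ℝ (Fin 2)) 1).Nonempty :=
      NormedSpace.sphere_nonempty.2 zero_le_one
    obtain ⟨v₀, hv₀mem, hmin⟩ := hsc.exists_isMinOn hsne hF.continuousOn
    refine ⟨_, key v₀ (by simpa using hv₀mem), fun v hv => ?_⟩
    exact hmin (by simpa using hv)
  -- diameter
  set D := Metric.diam Λ with hD
  have hDnon : (0:ℝ) ≤ D := Metric.diam_nonneg
  have hD0 : 0 < D :=
    lt_of_lt_of_le (dist_pos.2 hx21) (Metric.dist_le_diam_of_mem hΛcomp.isBounded hx2Λ hx1)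
  -- q ≥ 2 hence pmin ≤ 1/2
  have hq2 : 2 ≤ q := by
    by_contra hcon
    have hq1 : q = 1 := by omega
    subst hq1
    have hΛ1 : Λ = f 0 '' Λ := by
      conv_lhs => rw [hattr]
      ext w; simp [Fin.exists_fin_one]
    have hdist1 : ∀ u w, dist (f 0 u) (f 0 w) = lam * dist u w := by
      intro u w
      rw [hf, hf, dist_eq_norm]
      have : lam • u + t 0 - (lam • w + t 0) = lam • (u - w) := by
        rw [smul_sub]; abel
      rw [this, norm_smul, Real.norm_eq_abs, abs_of_pos hlam0, dist_eq_norm]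
    have hdist : ∀ k : ℕ, ∀ a b, dist ((f 0)^[k] a) ((f 0)^[k] b) = lam ^ k * dist a b := by
      intro k
      induction k with
      | zero => simp
      | succ k ih =>
        intro a b
        rw [Function.iterate_succ_apply', Function.iterate_succ_apply', hdist1, ih, pow_succ]
        ring
    have hsub : ∀ k : ℕ, Λ ⊆ (f 0)^[k] '' Λ := by
      intro k
      induction k with
      | zero => simp
      | succ k ih =>
        intro w hw
        rw [hΛ1] at hw
        obtain ⟨w', hw', rfl⟩ := hw
        obtain ⟨w'', hw'', rfl⟩ := ih hw'
        exact ⟨w'', hw'', by rw [Function.iterate_succ_apply']⟩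
    have hD0' : 0 < dist x2 x1 := dist_pos.2 hx21
    have htend := tendsto_pow_atTop_nhds_zero_of_lt_one hlam0.le hlam1
    have hpos : (0:ℝ) < dist x2 x1 / (D + 1) := by positivity
    obtain ⟨k, hk⟩ := (htend.eventually (gt_mem_nhds hpos)).exists
    obtain ⟨a, ha, ha'⟩ := hsub k hx2Λ
    obtain ⟨b, hb, hb'⟩ := hsub k hx1
    have heq : dist x2 x1 = lam ^ k * dist a b := by rw [← ha', ← hb', hdist]
    have hDle : dist a b ≤ D := Metric.dist_le_diam_of_mem hΛcomp.isBounded ha hb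
    have hlamk : 0 < lam ^ k := pow_pos hlam0 k
    rw [lt_div_iff₀ (by linarith)] at hk
    have h6 : lam ^ k * dist a b ≤ lam ^ k * D := mul_le_mul_of_nonneg_left hDle hlamk.le
    nlinarith
  have hpminhalf : pmin ≤ 1 / 2 := by
    have h1 : (q : ℝ) * pmin ≤ 1 := by
      calc (q : ℝ) * pmin = ∑ _i : Fin q, pmin := by
            rw [Finset.sum_const, Finset.card_univ, Fintype.card_fin, nsmul_eq_mul]
      _ ≤ ∑ i, p i := Finset.sum_le_sum (fun i _ => hpmin i)
      _ = 1 := hpsum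
    have h2 : (2 : ℝ) ≤ q := by exact_mod_cast hq2
    nlinarith
  -- choice of N
  obtain ⟨N, hN1, hNκ⟩ : ∃ N : ℕ, 1 ≤ N ∧ lam ^ N * D ≤ κ / 4 := by
    have htend := tendsto_pow_atTop_nhds_zero_of_lt_one hlam0.le hlam1
    have hpos : (0:ℝ) < κ / 4 / D := by positivity
    have hev := htend.eventually (gt_mem_nhds hpos)
    rw [eventually_atTop] at hev
    obtain ⟨N₀, hN₀⟩ := hev
    refine ⟨max 1 N₀, le_max_left _ _, ?_⟩
    have := hN₀ (max 1 N₀) (le_max_right _ _)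
    rw [lt_div_iff₀ hD0] at this
    linarith
  set α : ℝ := 1 - pmin ^ N with hα
  have hpminN0 : 0 < pmin ^ N := pow_pos hpmin0 N
  have hpminN1 : pmin ^ N ≤ 1 / 2 := by
    calc pmin ^ N ≤ pmin ^ 1 := pow_le_pow_of_le_one hpmin0.le (by linarith) hN1
    _ = pmin := pow_one pmin
    _ ≤ 1 / 2 := hpminhalf
  have hα0 : 0 < α := by rw [hα]; linarith
  have hα1 : α < 1 := by rw [hα]; linarith
  have hloglam : Real.log lam < 0 := Real.log_neg hlam0 hlam1
  have hlogα : Real.log α < 0 := Real.log_neg hα0 hα1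
  have hNlog : (N : ℝ) * Real.log lam < 0 :=
    mul_neg_of_pos_of_neg (by exact_mod_cast hN1) hloglam
  have hγpos : 0 < Real.log (1 - pmin ^ N) / (N * Real.log lam) :=
    div_pos_iff.2 (Or.inr ⟨hlogα, hNlog⟩)
  refine ⟨N, hN1, hγpos, ?_⟩
  -- null complement of Λ
  have hΛc : μ Λᶜ = 0 := by
    rw [← hsupp]
    apply measure_null_of_locally_null
    intro x hx
    rw [mem_compl_iff, msupport, mem_setOf_eq] at hx
    push_neg at hx
    obtain ⟨U, hU, hU0⟩ := hx
    exact ⟨U, mem_nhdsWithin_of_mem_nhds hU, le_zero_iff.1 hU0⟩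
  have hle : ∀ S : Set (EuclideanSpace ℝ (Fin 2)), μ S ≤ μ (S ∩ Λ) := by
    intro S
    calc μ S = μ ((S ∩ Λ) ∪ (S ∩ Λᶜ)) := by rw [Set.inter_union_compl]
    _ ≤ μ (S ∩ Λ) + μ (S ∩ Λᶜ) := measure_union_le _ _
    _ ≤ μ (S ∩ Λ) + μ Λᶜ := by gcongr; exact inter_subset_right
    _ = μ (S ∩ Λ) := by rw [hΛc, add_zero]
  have hμΛ : μ Λ = 1 := by
    refine le_antisymm prob_le_one ?_
    have := hle univ
    rwa [measure_univ, univ_inter] at this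
  -- the level-N structure
  obtain ⟨m, g, c, T, hc, hcsum, hg, hid, hcov⟩ :=
    iter_struct lam t f hf p hp hpsum pmin hpmin hpmin0 μ hμ Λ hattr N
  have hgcont : ∀ a, Continuous (g a) := by
    intro a
    have : g a = fun x => lam ^ N • x + T a := funext (hg a)
    rw [this]
    fun_prop
  intro v hv x hx
  set π : EuclideanSpace ℝ (Fin 2) → ℝ := fun y => ⟪y, v⟫ with hπ
  have hπcont : Continuous π := Continuous.inner continuous_id continuous_const
  set ν : Measure ℝ := μ.map π with hν
  have hνapp : ∀ s : Set ℝ, MeasurableSet s → ν s = μ (π ⁻¹' s) := by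
    intro s hs
    rw [hν, Measure.map_apply hπcont.measurable hs]
  -- a κ-separated pair in direction v
  obtain ⟨y, z, hyΛ, hzΛ, hyz⟩ : ∃ y z, y ∈ Λ ∧ z ∈ Λ ∧ κ ≤ |π y - π z| := by
    rcases le_max_iff.1 (hκ v hv) with h | h
    · exact ⟨x2, x1, hx2Λ, hx1, by rw [hπ]; simpa [inner_sub_left] using h⟩
    · exact ⟨x3, x1, hx3Λ, hx1, by rw [hπ]; simpa [inner_sub_left] using h⟩
  -- cylinders project into short intervals
  have hgdiam : ∀ (a : Fin m), ∀ w ∈ Λ, ∀ w' ∈ Λ, |π (g a w) - π (g a w')| ≤ κ / 4 := by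
    intro a w hw w' hw'
    have hsub : g a w - g a w' = lam ^ N • (w - w') := by
      rw [hg, hg, smul_sub]; abel
    have h1 : π (g a w) - π (g a w') = ⟪g a w - g a w', v⟫ := (inner_sub_left _ _ _).symm
    rw [h1, hsub]
    calc |⟪lam ^ N • (w - w'), v⟫| ≤ ‖lam ^ N • (w - w')‖ * ‖v‖ := abs_real_inner_le_norm _ _
    _ = lam ^ N * ‖w - w'‖ := by
        rw [hv, mul_one, norm_smul, Real.norm_eq_abs, abs_of_pos (pow_pos hlam0 N)]
    _ ≤ lam ^ N * D := by
        apply mul_le_mul_of_nonneg_left _ (pow_pos hlam0 N).le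
        rw [← dist_eq_norm]
        exact Metric.dist_le_diam_of_mem hΛcomp.isBounded hw hw'
    _ ≤ κ / 4 := hNκ
  -- core step
  have core : ∀ (c0 L : ℝ), 0 ≤ L → L ≤ κ / 4 → ∀ B : ℝ≥0∞,
      (∀ a, μ ((g a) ⁻¹' (π ⁻¹' (Icc c0 (c0 + L)))) ≤ B) →
      μ (π ⁻¹' (Icc c0 (c0 + L))) ≤ ENNReal.ofReal α * B := by
    intro c0 L hL0 hLκ B hB
    set I : Set ℝ := Icc c0 (c0 + L) with hI
    have hy' : y ∈ ⋃ a, g a '' Λ := hcov ▸ hyΛ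
    obtain ⟨ay, y', hy'Λ, hyy⟩ : ∃ a w, w ∈ Λ ∧ g a w = y := by
      simpa [mem_iUnion] using hy'
    have hz' : z ∈ ⋃ a, g a '' Λ := hcov ▸ hzΛ
    obtain ⟨az, z', hz'Λ, hzz⟩ : ∃ a w, w ∈ Λ ∧ g a w = z := by
      simpa [mem_iUnion] using hz'
    have hstar : ∃ astar : Fin m, ∀ w ∈ Λ, π (g astar w) ∉ I := by
      by_cases hca : ∀ w ∈ Λ, π (g ay w) ∉ I
      · exact ⟨ay, hca⟩
      · refine ⟨az, ?_⟩
        push_neg at hca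
        obtain ⟨w1, hw1Λ, hw1⟩ := hca
        intro w hw hwI
        have d1 : |π y - π (g ay w1)| ≤ κ / 4 := by
          rw [← hyy]; exact hgdiam ay y' hy'Λ w1 hw1Λ
        have d2 : |π (g az w) - π z| ≤ κ / 4 := by
          rw [← hzz]; exact hgdiam az w hw z' hz'Λ
        have d3 : |π (g ay w1) - π (g az w)| ≤ L := by
          rw [hI, mem_Icc] at hw1 hwI
          rw [abs_sub_le_iff]
          constructor <;> linarith [hw1.1, hw1.2, hwI.1, hwI.2]
        have hlt : |π y - π z| < κ := by
          calc |π y - π z| ≤ |π y - π (g ay w1)| + |π (g ay w1) - π z| :=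
                abs_sub_le _ _ _
          _ ≤ |π y - π (g ay w1)| + (|π (g ay w1) - π (g az w)| + |π (g az w) - π z|) := by
                linarith [abs_sub_le (π (g ay w1)) (π (g az w)) (π z)]
          _ ≤ κ / 4 + (L + κ / 4) := by linarith
          _ < κ := by linarith
        linarith
    obtain ⟨astar, hstar⟩ := hstar
    have hmeasI : MeasurableSet (π ⁻¹' I) := hπcont.measurable measurableSet_Icc
    have hexp : μ (π ⁻¹' I) = ∑ a, ENNReal.ofReal (c a) * μ ((g a) ⁻¹' (π ⁻¹' I)) := by
      conv_lhs => rw [hid]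
      rw [Measure.coe_finset_sum, Finset.sum_apply]
      congr 1
      funext a
      rw [Measure.smul_apply, smul_eq_mul, Measure.map_apply (hgcont a).measurable hmeasI]
    rw [hexp, ← Finset.sum_erase_add _ _ (Finset.mem_univ astar)]
    have hzero : μ ((g astar) ⁻¹' (π ⁻¹' I)) = 0 := by
      have hempty : (g astar) ⁻¹' (π ⁻¹' I) ∩ Λ = ∅ := by
        ext w
        simp only [mem_inter_iff, mem_preimage, mem_empty_iff_false, iff_false, not_and]
        intro hwI hwΛ
        exact hstar w hwΛ hwI
      have h := hle ((g astar) ⁻¹' (π ⁻¹' I))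
      rw [hempty] at h
      simpa using h
    rw [hzero, mul_zero, add_zero]
    calc ∑ a ∈ Finset.univ.erase astar, ENNReal.ofReal (c a) * μ ((g a) ⁻¹' (π ⁻¹' I))
        ≤ ∑ a ∈ Finset.univ.erase astar, ENNReal.ofReal (c a) * B :=
          Finset.sum_le_sum (fun a _ => mul_le_mul_right (hB a) _)
    _ = (∑ a ∈ Finset.univ.erase astar, ENNReal.ofReal (c a)) * B := by
          rw [← Finset.sum_mul]
    _ ≤ ENNReal.ofReal α * B := by
          apply mul_le_mul_left
          rw [← ENNReal.ofReal_sum_of_nonneg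
            (fun a _ => le_trans (pow_nonneg hpmin0.le N) (hc a))]
          apply ENNReal.ofReal_le_ofReal
          have hsum := Finset.sum_erase_add Finset.univ c (Finset.mem_univ astar)
          rw [hcsum] at hsum
          have := hc astar
          rw [hα]
          linarith
  -- main induction
  have Sk : ∀ k : ℕ, ∀ c0 : ℝ, μ (π ⁻¹' (Icc c0 (c0 + κ / 4 * lam ^ (k * N))))
      ≤ (ENNReal.ofReal α) ^ (k + 1) := by
    intro k
    induction k with
    | zero =>
      intro c0
      have h1 := core c0 (κ / 4 * lam ^ (0 * N)) (by positivity)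
        (by
          have : lam ^ (0 * N) = 1 := by norm_num
          rw [this, mul_one])
        1 (fun a => le_of_le_of_eq (measure_mono (subset_univ _)) measure_univ)
      simpa using h1
    | succ k ih =>
      intro c0
      have hpow : (0:ℝ) < lam ^ N := pow_pos hlam0 N
      have hLpos : (0:ℝ) ≤ κ / 4 * lam ^ ((k + 1) * N) := by positivity
      have hLle : κ / 4 * lam ^ ((k + 1) * N) ≤ κ / 4 := by
        have h1 : lam ^ ((k + 1) * N) ≤ 1 := pow_le_one₀ hlam0.le hlam1.le
        nlinarith
      have hB : ∀ a, μ ((g a) ⁻¹' (π ⁻¹' (Icc c0 (c0 + κ / 4 * lam ^ ((k + 1) * N)))))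
          ≤ (ENNReal.ofReal α) ^ (k + 1) := by
        intro a
        have hc0 : lam ^ N * ((c0 - ⟪T a, v⟫) / lam ^ N) + ⟪T a, v⟫ = c0 := by
          field_simp
          ring
        have hset : (g a) ⁻¹' (π ⁻¹' (Icc c0 (c0 + κ / 4 * lam ^ ((k + 1) * N))))
            = π ⁻¹' (Icc ((c0 - ⟪T a, v⟫) / lam ^ N)
                ((c0 - ⟪T a, v⟫) / lam ^ N + κ / 4 * lam ^ (k * N))) := by
          ext w
          simp only [mem_preimage, mem_Icc]
          have hπg : π (g a w) = lam ^ N * π w + ⟪T a, v⟫ := by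
            rw [hπ, hg]
            simp only [inner_add_left, real_inner_smul_left]
          rw [hπg, show (k + 1) * N = k * N + N by ring, pow_add]
          have hkey : lam ^ N * ((c0 - ⟪T a, v⟫) / lam ^ N) = c0 - ⟪T a, v⟫ := by
            field_simp
          have hexp : lam ^ N * ((c0 - ⟪T a, v⟫) / lam ^ N + κ / 4 * lam ^ (k * N))
              = (c0 - ⟪T a, v⟫) + κ / 4 * (lam ^ (k * N) * lam ^ N) := by
            rw [mul_add, hkey]; ring
          constructor
          · rintro ⟨h1', h2'⟩
            constructor
            · refine le_of_mul_le_mul_left ?_ hpow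
              rw [hkey]; linarith
            · refine le_of_mul_le_mul_left ?_ hpow
              rw [hexp]; linarith
          · rintro ⟨h1', h2'⟩
            have ha := mul_le_mul_of_nonneg_left h1' hpow.le
            have hb := mul_le_mul_of_nonneg_left h2' hpow.le
            rw [hkey] at ha
            rw [hexp] at hb
            exact ⟨by linarith, by linarith⟩
        rw [hset]
        exact ih _
      have h1 := core c0 (κ / 4 * lam ^ ((k + 1) * N)) hLpos hLle _ hB
      calc μ (π ⁻¹' (Icc c0 (c0 + κ / 4 * lam ^ ((k + 1) * N))))
          ≤ ENNReal.ofReal α * (ENNReal.ofReal α) ^ (k + 1) := h1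
      _ = (ENNReal.ofReal α) ^ (k + 1 + 1) := by ring
  -- ball upper bound
  have ballub : ∀ (r : ℝ) (k : ℕ), 0 < r → 2 * r ≤ κ / 4 * lam ^ (k * N) →
      ν (ball x r) ≤ (ENNReal.ofReal α) ^ (k + 1) := by
    intro r k hr h2r
    have hIcc : ball x r ⊆ Icc (x - r) (x - r + κ / 4 * lam ^ (k * N)) := by
      intro s hs
      rw [Real.ball_eq_Ioo] at hs
      exact ⟨hs.1.le, by linarith [hs.2]⟩
    calc ν (ball x r) = μ (π ⁻¹' ball x r) := hνapp _ measurableSet_ball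
    _ ≤ μ (π ⁻¹' Icc (x - r) (x - r + κ / 4 * lam ^ (k * N))) :=
        measure_mono (preimage_mono hIcc)
    _ ≤ _ := Sk k (x - r)
  -- ball lower bound
  have balllb : ∀ (r : ℝ) (n : ℕ), 0 < r → lam ^ n * D < r / 2 →
      ENNReal.ofReal (pmin ^ n) ≤ ν (ball x r) := by
    intro r n hr hrD
    obtain ⟨m', g', c', T', hc', hcsum', hg', hid', hcov'⟩ :=
      iter_struct lam t f hf p hp hpsum pmin hpmin hpmin0 μ hμ Λ hattr n
    have hg'cont : ∀ a, Continuous (g' a) := by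
      intro a
      have : g' a = fun w => lam ^ n • w + T' a := funext (hg' a)
      rw [this]
      fun_prop
    have hpos2 : 0 < ν (ball x (r / 2)) := hx _ (ball_mem_nhds x (by linarith))
    have hzE : ∃ z0 ∈ Λ, π z0 ∈ ball x (r / 2) := by
      by_contra hno
      push_neg at hno
      have hempty : π ⁻¹' (ball x (r / 2)) ∩ Λ = ∅ := by
        ext w
        simp only [mem_inter_iff, mem_preimage, mem_empty_iff_false, iff_false, not_and]
        intro hwI hwΛ
        exact hno w hwΛ hwI
      have h0 : ν (ball x (r / 2)) = 0 := by
        rw [hνapp _ measurableSet_ball]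
        have h := hle (π ⁻¹' ball x (r / 2))
        rw [hempty] at h
        simpa using h
      rw [h0] at hpos2
      exact lt_irrefl _ hpos2
    obtain ⟨z0, hz0Λ, hz0⟩ := hzE
    have hz0' : z0 ∈ ⋃ a, g' a '' Λ := hcov' ▸ hz0Λ
    obtain ⟨a, z1, hz1Λ, hz1⟩ : ∃ a w, w ∈ Λ ∧ g' a w = z0 := by
      simpa [mem_iUnion] using hz0'
    have himg : g' a '' Λ ⊆ π ⁻¹' (ball x r) := by
      rintro _ ⟨w, hwΛ, rfl⟩
      have hd : |π (g' a w) - π z0| ≤ lam ^ n * D := by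
        rw [← hz1]
        have hsub : g' a w - g' a z1 = lam ^ n • (w - z1) := by
          rw [hg', hg', smul_sub]; abel
        have h1 : π (g' a w) - π (g' a z1) = ⟪g' a w - g' a z1, v⟫ :=
          (inner_sub_left _ _ _).symm
        rw [h1, hsub]
        calc |⟪lam ^ n • (w - z1), v⟫| ≤ ‖lam ^ n • (w - z1)‖ * ‖v‖ :=
              abs_real_inner_le_norm _ _
        _ = lam ^ n * ‖w - z1‖ := by
            rw [hv, mul_one, norm_smul, Real.norm_eq_abs, abs_of_pos (pow_pos hlam0 n)]
        _ ≤ lam ^ n * D := by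
            apply mul_le_mul_of_nonneg_left _ (pow_pos hlam0 n).le
            rw [← dist_eq_norm]
            exact Metric.dist_le_diam_of_mem hΛcomp.isBounded hwΛ hz1Λ
      have hz0d : |π z0 - x| < r / 2 := by
        rw [mem_ball, Real.dist_eq] at hz0
        exact hz0
      have : |π (g' a w) - x| < r := by
        calc |π (g' a w) - x| ≤ |π (g' a w) - π z0| + |π z0 - x| := abs_sub_le _ _ _
        _ < lam ^ n * D + r / 2 := add_lt_add_of_le_of_lt hd hz0d
        _ < r := by linarith
      simpa [mem_preimage, mem_ball, Real.dist_eq] using this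
    have hms : MeasurableSet (g' a '' Λ) := (hΛcomp.image (hg'cont a)).measurableSet
    have hcyl : ENNReal.ofReal (c' a) ≤ μ (g' a '' Λ) := by
      have hsub : Λ ⊆ (g' a) ⁻¹' (g' a '' Λ) := subset_preimage_image _ _
      calc ENNReal.ofReal (c' a) = ENNReal.ofReal (c' a) * μ Λ := by rw [hμΛ, mul_one]
      _ ≤ ENNReal.ofReal (c' a) * μ ((g' a) ⁻¹' (g' a '' Λ)) :=
          mul_le_mul_right (measure_mono hsub) _
      _ = ENNReal.ofReal (c' a) * (μ.map (g' a)) (g' a '' Λ) := by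
          rw [Measure.map_apply (hg'cont a).measurable hms]
      _ ≤ ∑ b, ENNReal.ofReal (c' b) * (μ.map (g' b)) (g' a '' Λ) := by
          exact Finset.single_le_sum
            (f := fun b => ENNReal.ofReal (c' b) * (μ.map (g' b)) (g' a '' Λ))
            (fun b _ => by positivity) (Finset.mem_univ a)
      _ = μ (g' a '' Λ) := by
          conv_rhs => rw [hid']
          rw [Measure.coe_finset_sum, Finset.sum_apply]
          simp [Measure.smul_apply]
    calc ENNReal.ofReal (pmin ^ n) ≤ ENNReal.ofReal (c' a) :=
        ENNReal.ofReal_le_ofReal (hc' a)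
    _ ≤ μ (g' a '' Λ) := hcyl
    _ ≤ μ (π ⁻¹' ball x r) := measure_mono himg
    _ = ν (ball x r) := (hνapp _ measurableSet_ball).symm
  -- small-ball positivity and finiteness
  have hballpos : ∀ r : ℝ, 0 < r → 0 < ν (ball x r) := fun r hr =>
    hx (ball x r) (ball_mem_nhds x hr)
  have hνfin : ∀ s : Set ℝ, ν s ≤ 1 := by
    intro s
    have h1 : ν univ = 1 := by
      rw [hνapp univ MeasurableSet.univ, preimage_univ, measure_univ]
    calc ν s ≤ ν univ := measure_mono (subset_univ _)
    _ = 1 := h1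
  have hνne : ∀ s : Set ℝ, ν s ≠ ⊤ := fun s =>
    (lt_of_le_of_lt (hνfin s) ENNReal.one_lt_top).ne
  -- coboundedness
  have hcob : IsCoboundedUnder (· ≥ ·) (nhdsWithin (0:ℝ) (Ioi 0))
      (fun r : ℝ => Real.log (ν (ball x r)).toReal / Real.log r) := by
    have hlogpmin : Real.log pmin < 0 := Real.log_neg hpmin0 (by linarith)
    set M : ℝ := (-Real.log pmin) / (-Real.log lam) + 1 with hM
    have htends := tendsto_aux (-Real.log pmin) (-Real.log lam) (-Real.log (4 * D))
      (by linarith)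
    have hev2 : ∀ᶠ n : ℕ in atTop,
        ((n:ℝ) * (-Real.log pmin)) / ((n:ℝ) * (-Real.log lam) + (-Real.log (4 * D))) ≤ M :=
      htends.eventually (eventually_le_nhds (by rw [hM]; linarith))
    have hfreq : ∃ᶠ r in nhdsWithin (0:ℝ) (Ioi 0),
        Real.log (ν (ball x r)).toReal / Real.log r ≤ M := by
      rw [frequently_iff]
      intro U hU
      obtain ⟨δ, hδ0, hδsub⟩ := mem_nhdsGT_iff_exists_Ioo_subset.1 hU
      have hcond : ∀ᶠ n : ℕ in atTop, (4 * D * lam ^ n < min δ 1) ∧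
          (((n:ℝ) * (-Real.log pmin)) / ((n:ℝ) * (-Real.log lam) + (-Real.log (4 * D))) ≤ M) := by
        refine Filter.Eventually.and ?_ hev2
        have h4D : Tendsto (fun n : ℕ => 4 * D * lam ^ n) atTop (𝓝 0) := by
          have := (tendsto_pow_atTop_nhds_zero_of_lt_one hlam0.le hlam1).const_mul (4 * D)
          simpa using this
        exact h4D.eventually (gt_mem_nhds (lt_min (mem_Ioi.1 hδ0) one_pos))
      obtain ⟨n, hn1, hn2⟩ := hcond.exists
      set r : ℝ := 4 * D * lam ^ n with hr
      have hlamn : (0:ℝ) < lam ^ n := pow_pos hlam0 n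
      have hr0 : 0 < r := by positivity
      have hrsmall : r < min δ 1 := hn1
      refine ⟨r, hδsub ⟨hr0, lt_of_lt_of_le hrsmall (min_le_left _ _)⟩, ?_⟩
      have hr1 : r < 1 := lt_of_lt_of_le hrsmall (min_le_right _ _)
      have hlb := balllb r n hr0 (by nlinarith)
      have hνpos := hballpos r hr0
      have htR0 : 0 < (ν (ball x r)).toReal :=
        ENNReal.toReal_pos hνpos.ne' (hνne _)
      have htR1 : (ν (ball x r)).toReal ≤ 1 := by
        have := ENNReal.toReal_mono ENNReal.one_ne_top (hνfin (ball x r))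
        simpa using this
      have hlbR : pmin ^ n ≤ (ν (ball x r)).toReal := by
        have h := ENNReal.toReal_mono (hνne _) hlb
        rwa [ENNReal.toReal_ofReal (pow_nonneg hpmin0.le n)] at h
      have hlogr : Real.log r < 0 := Real.log_neg hr0 hr1
      have hlogr_eq : Real.log r = Real.log (4 * D) + (n:ℝ) * Real.log lam := by
        rw [hr, Real.log_mul (by positivity) (pow_ne_zero n hlam0.ne'), Real.log_pow]
      have hlogν : (n:ℝ) * Real.log pmin ≤ Real.log (ν (ball x r)).toReal := by
        calc (n:ℝ) * Real.log pmin = Real.log (pmin ^ n) := by rw [Real.log_pow]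
        _ ≤ _ := Real.log_le_log (pow_pos hpmin0 n) hlbR
      have hkey : Real.log (ν (ball x r)).toReal / Real.log r
          ≤ ((n:ℝ) * (-Real.log pmin)) / ((n:ℝ) * (-Real.log lam) + (-Real.log (4 * D))) := by
        have hden : (n:ℝ) * (-Real.log lam) + (-Real.log (4 * D)) = -Real.log r := by
          rw [hlogr_eq]; ring
        rw [hden]
        have h1 : Real.log (ν (ball x r)).toReal / Real.log r
            = (-Real.log (ν (ball x r)).toReal) / (-Real.log r) := by
          rw [neg_div_neg_eq]
        rw [h1]
        exact (div_le_div_iff_of_pos_right (by linarith : (0:ℝ) < -Real.log r)).2 (by linarith)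
      exact hkey.trans hn2
    refine ⟨M, fun b hb => ?_⟩
    rw [eventually_map] at hb
    obtain ⟨r, h1, h2⟩ := (hfreq.and_eventually hb).exists
    exact le_trans h2 h1
  -- eventual lower bound
  have hev : ∀ b : ℝ, b < Real.log (1 - pmin ^ N) / (N * Real.log lam) →
      ∀ᶠ r in nhdsWithin (0:ℝ) (Ioi 0),
        b ≤ Real.log (ν (ball x r)).toReal / Real.log r := by
    intro b hb
    have hNlogne : (N : ℝ) * Real.log lam ≠ 0 := hNlog.ne
    have htend2 := tendsto_aux (Real.log α) ((N:ℝ) * Real.log lam) (Real.log (κ/8)) hNlogne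
    have htend3 : Tendsto (fun k : ℕ =>
        (((k:ℝ)+1) * Real.log α) / (((k:ℝ)+1) * ((N:ℝ) * Real.log lam) + Real.log (κ/8)))
        atTop (𝓝 (Real.log α / ((N:ℝ) * Real.log lam))) := by
      have h := htend2.comp (tendsto_add_atTop_nat 1)
      apply h.congr
      intro k
      simp only [Function.comp_apply]
      push_cast
      ring_nf
    have hevk : ∀ᶠ k : ℕ in atTop, b <
        (((k:ℝ)+1) * Real.log α) / (((k:ℝ)+1) * ((N:ℝ) * Real.log lam) + Real.log (κ/8)) :=
      htend3.eventually (eventually_gt_nhds hb)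
    have hevsmall : ∀ᶠ k : ℕ in atTop, κ/8 * lam ^ (k * N) < 1 := by
      have hlamN1 : lam ^ N < 1 := pow_lt_one₀ hlam0.le hlam1 (by omega)
      have h : Tendsto (fun k : ℕ => κ/8 * lam ^ (k * N)) atTop (𝓝 0) := by
        have h2 := (tendsto_pow_atTop_nhds_zero_of_lt_one (pow_pos hlam0 N).le
          hlamN1).const_mul (κ/8)
        simp only [mul_zero] at h2
        apply h2.congr
        intro k
        rw [← pow_mul, mul_comm N k]
      exact h.eventually (gt_mem_nhds one_pos)
    obtain ⟨K, hK⟩ := eventually_atTop.1 (hevk.and hevsmall)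
    set δ : ℝ := κ/8 * lam ^ (K * N) with hδ
    have hδ0 : 0 < δ := by positivity
    have hδ1 : δ < 1 := (hK K le_rfl).2
    filter_upwards [Ioo_mem_nhdsGT_of_mem (⟨le_refl (0:ℝ), hδ0⟩ : (0:ℝ) ∈ Ico (0:ℝ) δ)]
      with r hr
    obtain ⟨hr0, hrδ⟩ := hr
    have hexj : ∃ j : ℕ, κ/8 * lam ^ ((K + j) * N) < r := by
      have h : Tendsto (fun j : ℕ => κ/8 * lam ^ ((K + j) * N)) atTop (𝓝 0) := by
        have hlamN1 : lam ^ N < 1 := pow_lt_one₀ hlam0.le hlam1 (by omega)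
        have h2 := (tendsto_pow_atTop_nhds_zero_of_lt_one (pow_pos hlam0 N).le
          hlamN1).const_mul (κ/8 * (lam ^ N) ^ K)
        simp only [mul_zero] at h2
        apply h2.congr
        intro j
        rw [mul_comm (K + j) N, pow_mul, pow_add]
        ring
      exact (h.eventually (gt_mem_nhds hr0)).exists
    set j0 := Nat.find hexj with hj0def
    have hj0 : κ/8 * lam ^ ((K + j0) * N) < r := Nat.find_spec hexj
    have hj0ne : j0 ≠ 0 := by
      intro h0
      rw [h0] at hj0
      simp only [add_zero] at hj0
      linarith
    obtain ⟨j1, hj1⟩ : ∃ j1, j0 = j1 + 1 := ⟨j0 - 1, by omega⟩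
    set k := K + j1 with hkdef
    have hk1 : r ≤ κ/8 * lam ^ (k * N) := by
      have hmin := Nat.find_min hexj (show j1 < j0 by omega)
      rw [not_lt] at hmin
      exact hmin
    have hk2 : κ/8 * lam ^ ((k + 1) * N) < r := by
      have : K + j0 = k + 1 := by omega
      rwa [this] at hj0
    have hkK : K ≤ k := Nat.le_add_right _ _
    obtain ⟨hbk, hsm⟩ := hK k hkK
    -- measure bound
    have hub := ballub r k hr0 (by nlinarith)
    have hνpos := hballpos r hr0
    have htR0 : 0 < (ν (ball x r)).toReal := ENNReal.toReal_pos hνpos.ne' (hνne _)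
    have hubR : (ν (ball x r)).toReal ≤ α ^ (k+1) := by
      rw [← ENNReal.ofReal_pow hα0.le] at hub
      have h := ENNReal.toReal_mono ENNReal.ofReal_ne_top hub
      rwa [ENNReal.toReal_ofReal (pow_nonneg hα0.le _)] at h
    have hlogν : Real.log (ν (ball x r)).toReal ≤ ((k:ℝ)+1) * Real.log α := by
      calc Real.log (ν (ball x r)).toReal ≤ Real.log (α ^ (k+1)) :=
          Real.log_le_log htR0 hubR
      _ = ((k:ℝ)+1) * Real.log α := by rw [Real.log_pow]; push_cast; ring
    have hrlt1 : r < 1 := by linarith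
    have hlogr0 : Real.log r < 0 := Real.log_neg hr0 hrlt1
    have hlogrlb : Real.log (κ/8) + (((k:ℝ)+1) * ((N:ℝ) * Real.log lam)) < Real.log r := by
      have h := Real.log_lt_log (by positivity) hk2
      rw [Real.log_mul (by positivity) (pow_ne_zero _ hlam0.ne'), Real.log_pow] at h
      calc Real.log (κ/8) + (((k:ℝ)+1) * ((N:ℝ) * Real.log lam))
          = Real.log (κ/8) + (((k+1)*N : ℕ):ℝ) * Real.log lam := by push_cast; ring
      _ < Real.log r := h
    set L : ℝ := Real.log (κ/8) + (((k:ℝ)+1) * ((N:ℝ) * Real.log lam)) with hL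
    have hL0 : L < 0 := lt_trans hlogrlb hlogr0
    have step1 : ((k:ℝ)+1) * Real.log α / Real.log r
        ≤ Real.log (ν (ball x r)).toReal / Real.log r := by
      rw [div_eq_mul_inv, div_eq_mul_inv]
      exact mul_le_mul_of_nonpos_right hlogν (inv_nonpos.2 hlogr0.le)
    have step2 : (((k:ℝ)+1) * Real.log α) / L ≤ (((k:ℝ)+1) * Real.log α) / Real.log r := by
      have e1 : (((k:ℝ)+1) * Real.log α) / L
          = (-(((k:ℝ)+1) * Real.log α)) / (-L) := (neg_div_neg_eq _ _).symm
      have e2 : (((k:ℝ)+1) * Real.log α) / Real.log r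
          = (-(((k:ℝ)+1) * Real.log α)) / (-Real.log r) := (neg_div_neg_eq _ _).symm
      rw [e1, e2]
      apply div_le_div_of_nonneg_left
      · have : Real.log α ≤ 0 := hlogα.le
        nlinarith [Nat.cast_nonneg (α := ℝ) k]
      · linarith
      · linarith
    have step0 : b ≤ (((k:ℝ)+1) * Real.log α) / L := by
      have : L = ((k:ℝ)+1) * ((N:ℝ) * Real.log lam) + Real.log (κ/8) := by rw [hL]; ring
      rw [this]
      exact hbk.le
    exact step0.trans (step2.trans step1)
  -- conclusion
  show Real.log (1 - pmin ^ N) / (N * Real.log lam)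
      ≤ liminf (fun r : ℝ => Real.log (ν (ball x r)).toReal / Real.log r)
        (nhdsWithin 0 (Ioi 0))
  apply le_of_forall_lt_imp_le_of_dense
  intro b hb
  exact Filter.le_liminf_of_le hcob (hev b hb)
end

section
/- Let Λ be a homogeneous homothetic self-similar set in ℝ³ (common contraction ratio, no rotations) not contained in any plane. Then for every unit vector v ∈ ℝ³ and every x ∈ Λ there exists an angle α with 0 < α < π/2 such that for every r > 0, the interior of B_r(x) ∩ C_{α,v}(x) intersects Λ, where C_{α,v}(x) = {y ∈ ℝ³ : |⟨x − y, v⟩| ≥ cos(α)‖x − y‖} is the closed double cone with vertex x, axis v and angle α. -/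
open Set Metric
open scoped ENNReal NNReal RealInnerProductSpace

/-- The closed double cone with vertex `x`, axis `v` and angle `α`. -/
def doubleCone (α : ℝ) (v x : EuclideanSpace ℝ (Fin 3)) : Set (EuclideanSpace ℝ (Fin 3)) :=
  {y | Real.cos α * ‖x - y‖ ≤ |⟪x - y, v⟫|}

/-- A homogeneous homothetic self-similar set in `ℝ³` not contained in any plane intersects the
interior of every small cone at each of its points. -/
theorem HHSS_cone_density {q : ℕ} (hq : 0 < q)
    (lam : ℝ) (hlam0 : 0 < lam) (hlam1 : lam < 1)
    (t : Fin q → EuclideanSpace ℝ (Fin 3))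
    (Λ : Set (EuclideanSpace ℝ (Fin 3)))
    (hΛcomp : IsCompact Λ) (hΛne : Λ.Nonempty)
    (hattr : Λ = ⋃ i, (fun x => lam • x + t i) '' Λ)
    (hplane : ∀ (x v : EuclideanSpace ℝ (Fin 3)), v ≠ 0 →
      ¬ Λ ⊆ {y | ⟪y - x, v⟫ = 0}) :
    ∀ v : EuclideanSpace ℝ (Fin 3), ‖v‖ = 1 → ∀ x ∈ Λ,
      ∃ α : ℝ, 0 < α ∧ α < Real.pi / 2 ∧
        ∀ r : ℝ, 0 < r → (interior (ball x r ∩ doubleCone α v x) ∩ Λ).Nonempty := by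
  intro v hv x hx
  have hvne : v ≠ 0 := by
    intro h; rw [h, norm_zero] at hv; norm_num at hv
  have hcont : Continuous fun y : EuclideanSpace ℝ (Fin 3) => ⟪y, v⟫ :=
    continuous_id.inner continuous_const
  obtain ⟨a, haΛ, ha⟩ := hΛcomp.exists_isMinOn hΛne hcont.continuousOn
  obtain ⟨b, hbΛ, hb⟩ := hΛcomp.exists_isMaxOn hΛne hcont.continuousOn
  set m := ⟪a, v⟫ with hm
  set M := ⟪b, v⟫ with hM
  have hmM : m < M := by
    by_contra h
    push_neg at h
    apply hplane a v hvne
    intro y hy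
    have h1 : m ≤ ⟪y, v⟫ := ha hy
    have h2 : ⟪y, v⟫ ≤ M := hb hy
    have : ⟪y, v⟫ = m := le_antisymm (h2.trans h) h1
    simp only [mem_setOf_eq, inner_sub_left]
    rw [this]; ring
  set c : ℝ := (M - m) / 2 with hc
  have hc0 : 0 < c := by simp only [hc]; linarith
  set D := Metric.diam Λ with hD
  have h2cD : 2 * c ≤ D := by
    have h1 : ⟪b - a, v⟫ = M - m := by rw [inner_sub_left]
    have h2 : ⟪b - a, v⟫ ≤ ‖b - a‖ * ‖v‖ := real_inner_le_norm _ _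
    have h3 : ‖b - a‖ = dist b a := (dist_eq_norm b a).symm
    have h4 : dist b a ≤ D := dist_le_diam_of_mem hΛcomp.isBounded hbΛ haΛ
    rw [hv] at h2
    simp only [hc]; rw [h1] at h2; linarith
  have hD0 : 0 < D := by linarith
  set κ : ℝ := c / (2 * D) with hκ
  have hκ0 : 0 < κ := div_pos hc0 (by linarith)
  have hκ1 : κ < 1 := by
    rw [hκ, div_lt_one (by linarith)]; linarith
  have hcos : Real.cos (Real.arccos κ) = κ := Real.cos_arccos (by linarith) hκ1.le
  refine ⟨Real.arccos κ, Real.arccos_pos.2 hκ1, Real.arccos_lt_pi_div_two.2 hκ0, ?_⟩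
  intro r hr
  -- iterated cylinder maps
  have key : ∀ n : ℕ, ∃ cn : EuclideanSpace ℝ (Fin 3), ∃ z ∈ Λ,
      x = lam ^ n • z + cn ∧ ∀ y ∈ Λ, lam ^ n • y + cn ∈ Λ := by
    intro n
    induction n with
    | zero => exact ⟨0, x, hx, by simp, fun y hy => by simpa using hy⟩
    | succ n ih =>
      obtain ⟨cn, z, hz, hxz, hmap⟩ := ih
      have hz' : z ∈ ⋃ i, (fun x => lam • x + t i) '' Λ := hattr ▸ hz
      simp only [mem_iUnion, mem_image] at hz'
      obtain ⟨i, z', hz', hzz⟩ := hz'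
      refine ⟨lam ^ n • t i + cn, z', hz', ?_, ?_⟩
      · rw [hxz, ← hzz, pow_succ]
        module
      · intro y hy
        have h1 : lam • y + t i ∈ Λ := by
          rw [hattr]; exact mem_iUnion.2 ⟨i, mem_image_of_mem _ hy⟩
        have h2 := hmap _ h1
        have h3 : lam ^ (n + 1) • y + (lam ^ n • t i + cn)
            = lam ^ n • (lam • y + t i) + cn := by rw [pow_succ]; module
        rw [h3]; exact h2
  obtain ⟨n, hn⟩ := exists_pow_lt_of_lt_one (div_pos hr hD0) hlam1
  obtain ⟨cn, z, hzΛ, hxz, hmap⟩ := key n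
  have hln : (0:ℝ) < lam ^ n := pow_pos hlam0 n
  -- choose a far point in the v-direction
  have hy : ∃ y ∈ Λ, c ≤ |⟪z - y, v⟫| := by
    rcases le_total ⟪z, v⟫ ((m + M) / 2) with h | h
    · refine ⟨b, hbΛ, ?_⟩
      have h1 : ⟪z - b, v⟫ = ⟪z, v⟫ - M := by rw [inner_sub_left]
      have h2 : ⟪z, v⟫ ≤ M := hb hzΛ
      rw [h1, abs_of_nonpos (by linarith)]; linarith
    · refine ⟨a, haΛ, ?_⟩
      have h1 : ⟪z - a, v⟫ = ⟪z, v⟫ - m := by rw [inner_sub_left]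
      have h2 : m ≤ ⟪z, v⟫ := ha hzΛ
      rw [h1, abs_of_nonneg (by linarith)]; linarith
  obtain ⟨y, hyΛ, hcy⟩ := hy
  set p := lam ^ n • y + cn with hp
  have hpΛ : p ∈ Λ := hmap y hyΛ
  have hxp : x - p = lam ^ n • (z - y) := by rw [hxz, hp]; module
  have hnorm : ‖x - p‖ = lam ^ n * ‖z - y‖ := by
    rw [hxp, norm_smul, Real.norm_of_nonneg hln.le]
  have hinner : ⟪x - p, v⟫ = lam ^ n * ⟪z - y, v⟫ := by
    rw [hxp, real_inner_smul_left]
  have hzyD : ‖z - y‖ ≤ D := by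
    rw [← dist_eq_norm]; exact dist_le_diam_of_mem hΛcomp.isBounded hzΛ hyΛ
  have hball : p ∈ ball x r := by
    rw [mem_ball, dist_eq_norm', hnorm]
    calc lam ^ n * ‖z - y‖ ≤ lam ^ n * D := by nlinarith
      _ < (r / D) * D := by nlinarith
      _ = r := by field_simp
  have hstrict : Real.cos (Real.arccos κ) * ‖x - p‖ < |⟪x - p, v⟫| := by
    rw [hcos, hnorm, hinner, abs_mul, abs_of_pos hln]
    have h1 : κ * (lam ^ n * ‖z - y‖) ≤ κ * (lam ^ n * D) :=
      mul_le_mul_of_nonneg_left (mul_le_mul_of_nonneg_left hzyD hln.le) hκ0.le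
    have hκD : κ * D = c / 2 := by
      rw [hκ]; field_simp
    have h2 : κ * (lam ^ n * D) = lam ^ n * (c / 2) := by
      calc κ * (lam ^ n * D) = lam ^ n * (κ * D) := by ring
        _ = lam ^ n * (c / 2) := by rw [hκD]
    nlinarith
  have hopen : IsOpen {w : EuclideanSpace ℝ (Fin 3) |
      Real.cos (Real.arccos κ) * ‖x - w‖ < |⟪x - w, v⟫|} := by
    apply isOpen_lt
    · exact continuous_const.mul (continuous_const.sub continuous_id).norm
    · exact ((continuous_const.sub continuous_id).inner continuous_const).abs
  have hsub : ball x r ∩ {w : EuclideanSpace ℝ (Fin 3) |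
      Real.cos (Real.arccos κ) * ‖x - w‖ < |⟪x - w, v⟫|}
      ⊆ interior (ball x r ∩ doubleCone (Real.arccos κ) v x) := by
    apply interior_maximal
    · refine inter_subset_inter Subset.rfl (fun w hw => ?_)
      exact (le_of_lt (hw : Real.cos (Real.arccos κ) * ‖x - w‖ < |⟪x - w, v⟫|) :
        Real.cos (Real.arccos κ) * ‖x - w‖ ≤ |⟪x - w, v⟫|)
    · exact isOpen_ball.inter hopen
  exact ⟨p, hsub ⟨hball, hstrict⟩, hpΛ⟩
end
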